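/- arXiv:2103.02924 — 4 statements merged into one kernel-verified Lean document; each statement's English description precedes it below -/
import Mathlib

section
/- Assume the generalized moment problem val = inf { ∫_K f_0 dμ : μ a positive finite Borel measure on K, ∫_K f_i dμ = b_i for all i ∈ {1,...,m}, μ(K) ≤ 1 } is feasible (i.e. some positive finite Borel measure on K satisfies all constraints). Then the infimum is attained by some feasible measure, and val equals the value val' of the dual problem val' = sup { Σ_{i=1}^m y_i b_i − t : (y,t) ∈ ℝ^m × ℝ_{≥0}, f_0(x) − Σ_{i=1}^m y_i f_i(x) + t ≥ 0 for all x ∈ K }. -/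
open MeasureTheory Set


theorem aux_isCompact_convexHull {d : ℕ} {T : Set (Fin d → ℝ)} (hT : IsCompact T)
    (hne : T.Nonempty) : IsCompact (convexHull ℝ T) := by
  classical
  obtain ⟨x₀, hx₀⟩ := hne
  set N := d + 1 with hN
  set φ : (Fin N → ℝ) × (Fin N → Fin d → ℝ) → (Fin d → ℝ) :=
    fun p => ∑ i, p.1 i • p.2 i with hφdef
  have hφ : Continuous φ := by
    apply continuous_finset_sum
    intro i _
    exact ((continuous_apply i).comp continuous_fst).smul
      ((continuous_apply i).comp continuous_snd)
  set D : Set ((Fin N → ℝ) × (Fin N → Fin d → ℝ)) :=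
    (stdSimplex ℝ (Fin N)) ×ˢ (Set.univ.pi fun _ => T) with hD
  have hDcomp : IsCompact D :=
    (isCompact_stdSimplex (𝕜 := ℝ) (ι := Fin N)).prod (isCompact_univ_pi fun _ => hT)
  have himg : convexHull ℝ T = φ '' D := by
    apply Set.Subset.antisymm
    · intro x hx
      obtain ⟨ι, hfin, z, w, hrange, haff, hwpos, hwsum, hxeq⟩ :=
        eq_pos_convex_span_of_mem_convexHull hx
      have hcard : Fintype.card ι ≤ N := by
        have h1 := haff.card_le_finrank_succ
        have h2 : Module.finrank ℝ (vectorSpan ℝ (Set.range z)) ≤ d := by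
          have := Submodule.finrank_le (vectorSpan ℝ (Set.range z))
          simpa using this
        omega
      obtain ⟨e⟩ : Nonempty (ι ↪ Fin N) :=
        Function.Embedding.nonempty_of_card_le (by simpa using hcard)
      set w' : Fin N → ℝ := fun j => if h : ∃ i, e i = j then w h.choose else 0 with hw'
      set z' : Fin N → Fin d → ℝ := fun j => if h : ∃ i, e i = j then z h.choose else x₀ with hz'
      have hwe : ∀ i, w' (e i) = w i := by
        intro i
        have h : ∃ i', e i' = e i := ⟨i, rfl⟩
        have := h.choose_spec
        have hch : h.choose = i := e.injective this
        simp only [w', dif_pos h, hch]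
      have hze : ∀ i, z' (e i) = z i := by
        intro i
        have h : ∃ i', e i' = e i := ⟨i, rfl⟩
        have hch : h.choose = i := e.injective h.choose_spec
        simp only [z', dif_pos h, hch]
      have hsum : ∀ {M : Type} [AddCommMonoid M] (G : ℝ → (Fin d → ℝ) → M), (∀ v, G 0 v = 0) →
          ∑ j, G (w' j) (z' j) = ∑ i, G (w i) (z i) := by
        intro M _ G hG0
        calc ∑ j : Fin N, G (w' j) (z' j)
            = ∑ j ∈ Finset.univ.map e, G (w' j) (z' j) := by
              refine (Finset.sum_subset (Finset.subset_univ _) ?_).symm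
              intro j _ hj
              have hnot : ¬ ∃ i, e i = j := by
                rintro ⟨i, hi⟩
                exact hj (Finset.mem_map.mpr ⟨i, Finset.mem_univ i, hi⟩)
              simp only [w', dif_neg hnot, hG0]
          _ = ∑ i, G (w' (e i)) (z' (e i)) := Finset.sum_map _ e _
          _ = ∑ i, G (w i) (z i) := by
              exact Finset.sum_congr rfl fun i _ => by rw [hwe, hze]
      refine ⟨(w', z'), ⟨⟨fun j => ?_, ?_⟩, fun j _ => ?_⟩, ?_⟩
      · by_cases h : ∃ i, e i = j
        · simp only [w', dif_pos h]; exact (hwpos _).le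
        · simp only [w', dif_neg h]; exact le_rfl
      · have := hsum (M := ℝ) (fun a _ => a) (fun v => rfl)
        rw [this, hwsum]
      · by_cases h : ∃ i, e i = j
        · simp only [z', dif_pos h]; exact hrange ⟨_, rfl⟩
        · simp only [z', dif_neg h]; exact hx₀
      · show ∑ j, w' j • z' j = x
        rw [hsum (fun a v => a • v) (fun v => zero_smul ℝ v), hxeq]
    · rintro _ ⟨⟨w, z⟩, ⟨hw, hz⟩, rfl⟩
      have := Finset.centerMass_mem_convexHull (Finset.univ) (fun i _ => hw.1 i)
        (by rw [hw.2]; norm_num) (fun i _ => hz i (Set.mem_univ i))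
      rwa [Finset.centerMass_eq_of_sum_1 _ _ hw.2] at this
  rw [himg]
  exact hDcomp.image hφ


theorem aux_integrable_dirac {α : Type*} [MeasurableSpace α] [MeasurableSingletonClass α]
    (h : α → ℝ) (a : α) : Integrable h (Measure.dirac a) := by
  have hae : h =ᵐ[Measure.dirac a] fun _ => h a := by
    rw [Filter.EventuallyEq, ae_iff]
    refine measure_mono_null (fun x hx => ?_) (by simp : Measure.dirac a {a}ᶜ = 0)
    simp only [mem_compl_iff, mem_singleton_iff]
    rintro rfl; exact hx rfl
  exact (integrable_const (h a)).congr hae.symm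

theorem aux_integral_sum_dirac {α ι : Type*} [MeasurableSpace α] [MeasurableSingletonClass α]
    (t : Finset ι) (c : ι → ℝ) (hc : ∀ i ∈ t, 0 ≤ c i) (x : ι → α) (h : α → ℝ) :
    ∫ a, h a ∂(∑ i ∈ t, ENNReal.ofReal (c i) • Measure.dirac (x i)) =
      ∑ i ∈ t, c i * h (x i) := by
  rw [integral_finset_sum_measure]
  · refine Finset.sum_congr rfl fun i hi => ?_
    rw [integral_smul_measure, integral_dirac, ENNReal.toReal_ofReal (hc i hi), smul_eq_mul]
  · intro i _
    exact (aux_integrable_dirac h (x i)).smul_measure ENNReal.ofReal_ne_top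

theorem aux_repr {n d : ℕ} {K : Set (Fin n → ℝ)} (hKc : IsClosed K)
    {g : (Fin n → ℝ) → (Fin d → ℝ)} {p : Fin d → ℝ}
    (hp : p ∈ convexHull ℝ (insert 0 (g '' K))) :
    ∃ μ : Measure (Fin n → ℝ), IsFiniteMeasure μ ∧ μ Kᶜ = 0 ∧ μ K ≤ 1 ∧
      ∀ (h : (Fin n → ℝ) → ℝ) (j : Fin d), (∀ x ∈ K, h x = g x j) →
        ∫ x, h x ∂μ = p j := by
  classical
  rw [convexHull_eq] at hp
  obtain ⟨ι, t, w, z, hw0, hw1, hzT, hcm⟩ := hp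
  rw [Finset.centerMass_eq_of_sum_1 _ _ hw1] at hcm
  set t' : Finset ι := t.filter (fun i => z i ∈ g '' K) with ht'
  have ht'sub : t' ⊆ t := Finset.filter_subset _ _
  set x : ι → (Fin n → ℝ) := fun i =>
    if h : z i ∈ g '' K then h.choose else (fun _ => 0) with hx
  have hxK : ∀ i ∈ t', x i ∈ K := by
    intro i hi
    have h : z i ∈ g '' K := (Finset.mem_filter.mp hi).2
    simp only [x, dif_pos h]
    exact h.choose_spec.1
  have hgx : ∀ i ∈ t', g (x i) = z i := by
    intro i hi
    have h : z i ∈ g '' K := (Finset.mem_filter.mp hi).2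
    simp only [x, dif_pos h]
    exact h.choose_spec.2
  set μ : Measure (Fin n → ℝ) := ∑ i ∈ t', ENNReal.ofReal (w i) • Measure.dirac (x i) with hμ
  have hw0' : ∀ i ∈ t', 0 ≤ w i := fun i hi => hw0 i (ht'sub hi)
  have huniv : μ univ ≤ 1 := by
    rw [hμ, Measure.finset_sum_apply]
    simp only [Measure.smul_apply, measure_univ, smul_eq_mul, mul_one]
    rw [← ENNReal.ofReal_sum_of_nonneg hw0']
    refine ENNReal.ofReal_le_one.mpr ?_
    rw [← hw1]
    exact Finset.sum_le_sum_of_subset_of_nonneg ht'sub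
      (fun i hi _ => hw0 i hi)
  refine ⟨μ, ⟨lt_of_le_of_lt huniv ENNReal.one_lt_top⟩, ?_, le_trans (measure_mono (subset_univ K)) huniv, ?_⟩
  · rw [hμ, Measure.finset_sum_apply]
    refine Finset.sum_eq_zero fun i hi => ?_
    rw [Measure.smul_apply, Measure.dirac_apply' _ hKc.measurableSet.compl]
    rw [Set.indicator_of_notMem (by simpa using hxK i hi)]
    simp
  · intro h j hh
    rw [hμ, aux_integral_sum_dirac t' w hw0' x h]
    have : ∀ i ∈ t', w i * h (x i) = w i * z i j := by
      intro i hi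
      rw [hh (x i) (hxK i hi), hgx i hi]
    rw [Finset.sum_congr rfl this]
    have hext : ∑ i ∈ t', w i * z i j = ∑ i ∈ t, w i * z i j := by
      refine Finset.sum_subset ht'sub fun i hi hni => ?_
      have : z i ∈ insert 0 (g '' K) := hzT i hi
      rcases Set.mem_insert_iff.mp this with h0 | hK'
      · rw [h0]; simp
      · exact absurd (Finset.mem_filter.mpr ⟨hi, hK'⟩) hni
    rw [hext, ← hcm]
    rw [Finset.sum_apply]
    exact Finset.sum_congr rfl fun i _ => by simp [Pi.smul_apply]


theorem aux_mem_hull {n d : ℕ} {K : Set (Fin n → ℝ)} (hK : IsCompact K)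
    {g : (Fin n → ℝ) → (Fin d → ℝ)} (hg : Continuous g)
    (μ : Measure (Fin n → ℝ)) [IsFiniteMeasure μ] (hμc : μ Kᶜ = 0) (hμ1 : μ K ≤ 1) :
    (∫ x, g x ∂μ) ∈ convexHull ℝ (insert 0 (g '' K)) := by
  classical
  set T : Set (Fin d → ℝ) := insert 0 (g '' K) with hT
  have hTcomp : IsCompact T := (hK.image hg).insert 0
  have hScomp : IsCompact (convexHull ℝ T) :=
    aux_isCompact_convexHull hTcomp ⟨0, Set.mem_insert _ _⟩
  have hSconv : Convex ℝ (convexHull ℝ T) := convex_convexHull ℝ T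
  have h0S : (0 : Fin d → ℝ) ∈ convexHull ℝ T := subset_convexHull ℝ T (Set.mem_insert _ _)
  have hae : ∀ᵐ x ∂μ, x ∈ K := by
    rw [ae_iff]
    exact hμc
  have hrestrict : μ.restrict K = μ := Measure.restrict_eq_self_of_ae_mem hae
  have hInt : Integrable g μ := by
    rw [← hrestrict]
    exact hg.continuousOn.integrableOn_compact' hK hK.isClosed.measurableSet
  by_cases hzero : μ = 0
  · rw [hzero]
    simpa using h0S
  · haveI : NeZero μ := ⟨hzero⟩
    set ν : Measure (Fin n → ℝ) := (μ univ)⁻¹ • μ with hν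
    haveI : IsProbabilityMeasure ν := MeasureTheory.isProbabilityMeasureSMul
    have hunivne : μ univ ≠ 0 := fun h => hzero (Measure.measure_univ_eq_zero.mp h)
    have hμν : μ = (μ univ) • ν := by
      rw [hν, smul_smul, ENNReal.mul_inv_cancel hunivne (measure_ne_top μ univ), one_smul]
    have hνint : Integrable g ν :=
      hInt.smul_measure (ENNReal.inv_ne_top.mpr hunivne)
    have hνae : ∀ᵐ x ∂ν, g x ∈ convexHull ℝ T := by
      have : ∀ᵐ x ∂ν, x ∈ K := by
        rw [ae_iff]
        simp only [hν, Measure.smul_apply, smul_eq_mul]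
        rw [show {a | ¬ a ∈ K} = Kᶜ from rfl, hμc, mul_zero]
      filter_upwards [this] with x hx
      exact subset_convexHull ℝ T (Set.mem_insert_of_mem _ ⟨x, hx, rfl⟩)
    have hpS : (∫ x, g x ∂ν) ∈ convexHull ℝ T :=
      hSconv.integral_mem hScomp.isClosed hνae hνint
    have hc1 : μ univ ≤ 1 := by
      calc μ univ = μ (K ∪ Kᶜ) := by rw [Set.union_compl_self]
        _ ≤ μ K + μ Kᶜ := measure_union_le _ _
        _ = μ K := by rw [hμc, add_zero]
        _ ≤ 1 := hμ1
    set c : ℝ := (μ univ).toReal with hcdef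
    have hc0 : 0 ≤ c := ENNReal.toReal_nonneg
    have hcle : c ≤ 1 := by
      rw [hcdef]
      exact ENNReal.toReal_le_of_le_ofReal zero_le_one (by simpa using hc1)
    have hint_eq : (∫ x, g x ∂μ) = c • (∫ x, g x ∂ν) := by
      conv_lhs => rw [hμν]
      rw [integral_smul_measure]
    have := hSconv h0S hpS (sub_nonneg.mpr hcle) hc0 (by ring)
    rw [smul_zero, zero_add] at this
    rw [hint_eq]
    exact this

theorem aux_integrable {n : ℕ} {E : Type*} [NormedAddCommGroup E]
    {K : Set (Fin n → ℝ)} (hK : IsCompact K)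
    {g : (Fin n → ℝ) → E} (hg : Continuous g)
    (μ : Measure (Fin n → ℝ)) [IsFiniteMeasure μ] (hμc : μ Kᶜ = 0) :
    Integrable g μ := by
  have hae : ∀ᵐ x ∂μ, x ∈ K := by rw [ae_iff]; exact hμc
  have hrestrict : μ.restrict K = μ := Measure.restrict_eq_self_of_ae_mem hae
  rw [← hrestrict]
  exact hg.continuousOn.integrableOn_compact' hK hK.isClosed.measurableSet

/-- **Theorem (strong duality and attainment for the GMP).**
If the generalized moment problem over a compact set `K ⊆ ℝⁿ` is feasible, then its
infimum is attained by some feasible measure, and the primal value equals the dual value. -/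
theorem gmp_attained_and_strong_duality
    {n m : ℕ} (K : Set (Fin n → ℝ)) (hK : IsCompact K)
    (f0 : (Fin n → ℝ) → ℝ) (f : Fin m → (Fin n → ℝ) → ℝ) (b : Fin m → ℝ)
    (hf0 : ContinuousOn f0 K) (hf : ∀ i, ContinuousOn (f i) K)
    (Feas : Set (Measure (Fin n → ℝ)))
    (hFeas : Feas = {μ : Measure (Fin n → ℝ) | IsFiniteMeasure μ ∧ μ Kᶜ = 0 ∧
      (∀ i, ∫ x, f i x ∂μ = b i) ∧ μ K ≤ 1})
    (hfeas : Feas.Nonempty)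
    (val : ℝ) (hval : val = sInf ((fun μ => ∫ x, f0 x ∂μ) '' Feas))
    (val' : ℝ)
    (hval' : val' = sSup {v : ℝ | ∃ (y : Fin m → ℝ) (t : ℝ), 0 ≤ t ∧
      (∀ x ∈ K, 0 ≤ f0 x - ∑ i, y i * f i x + t) ∧ v = ∑ i, y i * b i - t}) :
    (∃ μ ∈ Feas, ∫ x, f0 x ∂μ = val) ∧ val = val' := by
  classical
  have hKcl : IsClosed K := hK.isClosed
  -- Tietze extensions
  have hext : ∀ (h : (Fin n → ℝ) → ℝ), ContinuousOn h K →
      ∃ G : (Fin n → ℝ) → ℝ, Continuous G ∧ ∀ x ∈ K, G x = h x := by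
    intro h hh
    obtain ⟨G, hG⟩ := ContinuousMap.exists_restrict_eq hKcl ⟨K.restrict h, hh.restrict⟩
    refine ⟨G, G.continuous, fun x hx => ?_⟩
    have := DFunLike.congr_fun hG (⟨x, hx⟩ : K)
    exact this
  obtain ⟨F0, hF0c, hF0⟩ := hext f0 hf0
  have : ∀ i, ∃ G : (Fin n → ℝ) → ℝ, Continuous G ∧ ∀ x ∈ K, G x = f i x :=
    fun i => hext (f i) (hf i)
  choose F hFc hF using this
  -- the moment map
  set g : (Fin n → ℝ) → (Fin (m+1) → ℝ) :=
    fun x => Fin.snoc (fun i => F i x) (F0 x) with hg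
  have hgcont : Continuous g := by
    refine continuous_pi fun j => ?_
    refine Fin.lastCases ?_ ?_ j
    · simpa [hg] using hF0c
    · intro i
      simpa [hg] using hFc i
  set T : Set (Fin (m+1) → ℝ) := insert 0 (g '' K) with hT
  have hTcomp : IsCompact T := (hK.image hgcont).insert 0
  set S : Set (Fin (m+1) → ℝ) := convexHull ℝ T with hS
  have hScomp : IsCompact S := aux_isCompact_convexHull hTcomp ⟨0, Set.mem_insert _ _⟩
  have hSconv : Convex ℝ S := convex_convexHull ℝ T
  -- coordinates of the vector integral for feasible measures
  have hVcoord : ∀ μ : Measure (Fin n → ℝ), IsFiniteMeasure μ → μ Kᶜ = 0 →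
      ∀ j : Fin (m+1), (∫ x, g x ∂μ) j = ∫ x, g x j ∂μ := by
    intro μ hfin hμc j
    haveI := hfin
    exact ((ContinuousLinearMap.proj (R := ℝ) (φ := fun _ : Fin (m+1) => ℝ) j).integral_comp_comm
      (aux_integrable hK hgcont μ hμc)).symm
  have hae_mem : ∀ μ : Measure (Fin n → ℝ), μ Kᶜ = 0 → ∀ᵐ x ∂μ, x ∈ K := by
    intro μ hμc; rw [ae_iff]; exact hμc
  have hVcast : ∀ μ : Measure (Fin n → ℝ), IsFiniteMeasure μ → μ Kᶜ = 0 →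
      ∀ i : Fin m, (∫ x, g x ∂μ) i.castSucc = ∫ x, f i x ∂μ := by
    intro μ hfin hμc i
    rw [hVcoord μ hfin hμc]
    have h1 : ∀ x : Fin n → ℝ, g x i.castSucc = F i x := by
      intro x; simp [hg]
    simp_rw [h1]
    refine integral_congr_ae ?_
    filter_upwards [hae_mem μ hμc] with x hx
    exact hF i x hx
  have hVlast : ∀ μ : Measure (Fin n → ℝ), IsFiniteMeasure μ → μ Kᶜ = 0 →
      (∫ x, g x ∂μ) (Fin.last m) = ∫ x, f0 x ∂μ := by
    intro μ hfin hμc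
    rw [hVcoord μ hfin hμc]
    have h1 : ∀ x : Fin n → ℝ, g x (Fin.last m) = F0 x := by
      intro x; simp [hg]
    simp_rw [h1]
    refine integral_congr_ae ?_
    filter_upwards [hae_mem μ hμc] with x hx
    exact hF0 x hx
  -- the feasible moment set
  set A : Set (Fin (m+1) → ℝ) := S ∩ {p | ∀ i : Fin m, p i.castSucc = b i} with hA
  have hAcl : IsClosed {p : Fin (m+1) → ℝ | ∀ i : Fin m, p i.castSucc = b i} := by
    have : {p : Fin (m+1) → ℝ | ∀ i : Fin m, p i.castSucc = b i} =
        ⋂ i : Fin m, {p | p i.castSucc = b i} := by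
      ext p; simp
    rw [this]
    exact isClosed_iInter fun i => isClosed_eq (continuous_apply _) continuous_const
  have hAcomp : IsCompact A := hScomp.inter_right hAcl
  have hmemA : ∀ μ ∈ Feas, (∫ x, g x ∂μ) ∈ A := by
    intro μ hμ
    rw [hFeas] at hμ
    obtain ⟨hfin, hμc, hμb, hμ1⟩ := hμ
    haveI := hfin
    refine ⟨aux_mem_hull hK hgcont μ hμc hμ1, fun i => ?_⟩
    rw [hVcast μ hfin hμc i, hμb i]
  obtain ⟨μ0, hμ0⟩ := hfeas
  have hAne : A.Nonempty := ⟨_, hmemA μ0 hμ0⟩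
  -- minimize the last coordinate on A
  obtain ⟨pstar, hpA, hpmin⟩ := hAcomp.exists_isMinOn hAne
    (continuous_apply (Fin.last m)).continuousOn
  rw [isMinOn_iff] at hpmin
  -- representing measure for pstar
  obtain ⟨μs, hμsfin, hμsc, hμs1, hμsint⟩ := aux_repr hKcl (hpA.1 : pstar ∈ convexHull ℝ _)
  have hμsf : ∀ i, ∫ x, f i x ∂μs = b i := by
    intro i
    rw [hμsint (f i) i.castSucc (fun x hx => by simp [hg, (hF i x hx).symm]), hpA.2 i]
  have hμsf0 : ∫ x, f0 x ∂μs = pstar (Fin.last m) :=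
    hμsint f0 (Fin.last m) (fun x hx => by simp [hg, (hF0 x hx).symm])
  have hμsFeas : μs ∈ Feas := by
    rw [hFeas]; exact ⟨hμsfin, hμsc, hμsf, hμs1⟩
  -- val = pstar last
  have hlb : ∀ r ∈ (fun μ => ∫ x, f0 x ∂μ) '' Feas, pstar (Fin.last m) ≤ r := by
    rintro r ⟨μ, hμ, rfl⟩
    have h1 := hmemA μ hμ
    have h2 := hpmin _ h1
    rw [hFeas] at hμ
    rwa [hVlast μ hμ.1 hμ.2.1] at h2
  have hval_eq : val = pstar (Fin.last m) := by
    rw [hval]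
    refine le_antisymm (csInf_le ⟨pstar (Fin.last m), hlb⟩ ⟨μs, hμsFeas, hμsf0⟩)
      (le_csInf ⟨_, ⟨μs, hμsFeas, rfl⟩⟩ hlb)
  -- dual set
  set D : Set ℝ := {v : ℝ | ∃ (y : Fin m → ℝ) (t : ℝ), 0 ≤ t ∧
      (∀ x ∈ K, 0 ≤ f0 x - ∑ i, y i * f i x + t) ∧ v = ∑ i, y i * b i - t} with hD
  -- weak duality
  have hweak : ∀ v ∈ D, v ≤ pstar (Fin.last m) := by
    rintro v ⟨y, t, ht, hyt, rfl⟩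
    set H : Set (Fin (m+1) → ℝ) :=
      {p | 0 ≤ p (Fin.last m) - ∑ i, y i * p i.castSucc + t} with hH
    have hHconv : Convex ℝ H := by
      intro p hp q hq a b' ha hb' hab
      simp only [hH, Set.mem_setOf_eq, Pi.add_apply, Pi.smul_apply, smul_eq_mul] at *
      have hsum : ∑ i, y i * (a * p i.castSucc + b' * q i.castSucc) =
          a * ∑ i, y i * p i.castSucc + b' * ∑ i, y i * q i.castSucc := by
        rw [Finset.mul_sum, Finset.mul_sum, ← Finset.sum_add_distrib]
        exact Finset.sum_congr rfl fun i _ => by ring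
      rw [hsum]
      nlinarith [mul_nonneg ha hp, mul_nonneg hb' hq]
    have hTH : T ⊆ H := by
      rintro p (rfl | ⟨x, hx, rfl⟩)
      · simp only [hH, Set.mem_setOf_eq, Pi.zero_apply, mul_zero, Finset.sum_const_zero]
        linarith
      · simp only [hH, Set.mem_setOf_eq, hg, Fin.snoc_last, Fin.snoc_castSucc]
        have h1 : ∀ i, y i * F i x = y i * f i x := fun i => by rw [hF i x hx]
        rw [Finset.sum_congr rfl fun i _ => h1 i, hF0 x hx]
        exact hyt x hx
    have hSH : S ⊆ H := convexHull_min hTH hHconv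
    have := hSH hpA.1
    simp only [hH, Set.mem_setOf_eq] at this
    have h2 : ∑ i, y i * pstar i.castSucc = ∑ i, y i * b i :=
      Finset.sum_congr rfl fun i _ => by rw [hpA.2 i]
    rw [h2] at this
    linarith
  -- strict duality: every val - ε is beaten
  have hstrict : ∀ ε : ℝ, 0 < ε → ∃ v ∈ D, pstar (Fin.last m) - ε < v := by
    intro ε hε
    set q : Fin (m+1) → ℝ := Fin.snoc b (pstar (Fin.last m) - ε) with hq
    have hqA : q ∉ S := by
      intro hqS
      have hqA' : q ∈ A := ⟨hqS, fun i => by simp [hq]⟩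
      have := hpmin q hqA'
      simp only [hq, Fin.snoc_last] at this
      linarith
    obtain ⟨φ, u, hqu, hSu⟩ :=
      geometric_hahn_banach_point_closed hSconv hScomp.isClosed hqA
    set c : Fin (m+1) → ℝ := fun j => φ (fun j' => if j = j' then 1 else 0) with hc
    have hφ : ∀ p : Fin (m+1) → ℝ, φ p = ∑ j, p j * c j := by
      intro p
      conv_lhs => rw [pi_eq_sum_univ p, map_sum]
      refine Finset.sum_congr rfl fun j _ => ?_
      rw [_root_.map_smul, smul_eq_mul, hc]
    have hu0 : u < 0 := by
      have := hSu 0 (subset_convexHull ℝ T (Set.mem_insert _ _))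
      rwa [map_zero] at this
    have hppS := hSu pstar hpA.1
    have hφp : φ pstar = ∑ i : Fin m, b i * c i.castSucc +
        pstar (Fin.last m) * c (Fin.last m) := by
      rw [hφ, Fin.sum_univ_castSucc]
      congr 1
      exact Finset.sum_congr rfl fun i _ => by rw [hpA.2 i]
    have hφq : φ q = ∑ i : Fin m, b i * c i.castSucc +
        (pstar (Fin.last m) - ε) * c (Fin.last m) := by
      rw [hφ, Fin.sum_univ_castSucc]
      simp [hq]
    have hclast : 0 < c (Fin.last m) := by
      nlinarith [hqu, hppS, hφp, hφq]
    set L : ℝ := c (Fin.last m) with hL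
    refine ⟨(∑ i, (-(c i.castSucc) / L) * b i) - (-u / L),
      ⟨fun i => -(c i.castSucc) / L, -u / L, div_nonneg (by linarith) hclast.le, ?_, rfl⟩, ?_⟩
    · intro x hx
      have hgxS : g x ∈ S := subset_convexHull ℝ T (Set.mem_insert_of_mem _ ⟨x, hx, rfl⟩)
      have hux := hSu _ hgxS
      have hφg : φ (g x) = ∑ i : Fin m, f i x * c i.castSucc + f0 x * L := by
        rw [hφ, Fin.sum_univ_castSucc]
        congr 1
        · refine Finset.sum_congr rfl fun i _ => ?_
          have : g x i.castSucc = F i x := by simp [hg]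
          rw [this, hF i x hx]
        · have : g x (Fin.last m) = F0 x := by simp [hg]
          rw [this, hF0 x hx]
      have hsum : ∑ i, (-(c i.castSucc) / L) * f i x =
          (-(∑ i, f i x * c i.castSucc)) / L := by
        calc ∑ i, (-(c i.castSucc) / L) * f i x
            = ∑ i, (-(f i x * c i.castSucc)) / L :=
              Finset.sum_congr rfl fun i _ => by ring
          _ = (∑ i, -(f i x * c i.castSucc)) / L := by rw [Finset.sum_div]
          _ = (-(∑ i, f i x * c i.castSucc)) / L := by rw [Finset.sum_neg_distrib]
      have key : f0 x - ∑ i, (-(c i.castSucc) / L) * f i x + (-u / L) =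
          (φ (g x) - u) / L := by
        rw [hsum, hφg]; field_simp; ring
      rw [key]
      exact div_nonneg (by linarith) hclast.le
    · have hsumb : ∑ i, (-(c i.castSucc) / L) * b i =
          (-(∑ i, b i * c i.castSucc)) / L := by
        calc ∑ i, (-(c i.castSucc) / L) * b i
            = ∑ i, (-(b i * c i.castSucc)) / L :=
              Finset.sum_congr rfl fun i _ => by ring
          _ = (∑ i, -(b i * c i.castSucc)) / L := by rw [Finset.sum_div]
          _ = (-(∑ i, b i * c i.castSucc)) / L := by rw [Finset.sum_neg_distrib]
      have key : (∑ i, (-(c i.castSucc) / L) * b i) - (-u / L) =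
          (u - ∑ i, b i * c i.castSucc) / L := by
        rw [hsumb]; field_simp; ring
      rw [key, lt_div_iff₀ hclast]
      rw [hφq] at hqu
      linarith
  -- assemble
  have hDne : D.Nonempty := ⟨_, (hstrict 1 one_pos).choose_spec.1⟩
  have hbdd : BddAbove D := ⟨pstar (Fin.last m), fun v hv => hweak v hv⟩
  have hle : val' ≤ val := by
    rw [hval']
    exact csSup_le hDne fun v hv => (hweak v hv).trans hval_eq.ge
  have hge : val ≤ val' := by
    by_contra hlt
    push_neg at hlt
    obtain ⟨v, hvD, hvgt⟩ := hstrict (val - val') (by linarith)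
    have hvle : v ≤ val' := by rw [hval']; exact le_csSup hbdd hvD
    rw [← hval_eq] at hvgt
    linarith
  exact ⟨⟨μs, hμsFeas, by rw [hμsf0, hval_eq]⟩, le_antisymm hge hle⟩
end

section
/- Let f = Σ_{|α|=d} f_α x^α be a homogeneous polynomial of degree d in n variables, let ε = min_{x ∈ Δ_{n−1}} f(x), and assume ε > 0. If k is an integer with k > (d(d−1)/2)·(B(f)/ε) − d, then all coefficients of the polynomial (x_1 + ... + x_n)^k · f(x) are positive. -/
open MvPolynomial Finset

/-- For a homogeneous polynomial `f = ∑_{|α| = d} f_α x^α` of degree `d`,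
`B(f) = max_{|α| = d} (α₁!⋯αₙ!/d!)·f_α`. -/
noncomputable def Bcoef {n : ℕ} (d : ℕ) (f : MvPolynomial (Fin n) ℝ) : ℝ :=
  sSup {c : ℝ | ∃ α : Fin n →₀ ℕ, (∑ i, α i) = d ∧
    c = ((∏ i, Nat.factorial (α i) : ℕ) : ℝ) / (Nat.factorial d : ℝ) * coeff α f}


namespace PolyaAux

variable {n : ℕ}

noncomputable def e (m : Fin n → ℕ) : Fin n →₀ ℕ := Finsupp.equivFunOnFinite.symm m

@[simp] lemma e_apply (m : Fin n → ℕ) (i : Fin n) : e m i = m i := rfl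

@[simp] lemma e_coe (γ : Fin n →₀ ℕ) : e ⇑γ = γ := Finsupp.equivFunOnFinite_symm_coe γ

lemma e_coeFn (m : Fin n → ℕ) : ⇑(e m) = m := rfl

lemma e_eq_iff (m : Fin n → ℕ) (γ : Fin n →₀ ℕ) : e m = γ ↔ m = ⇑γ := by
  constructor
  · rintro rfl; rfl
  · rintro rfl; exact e_coe γ

lemma prodXpow (m : Fin n → ℕ) :
    (∏ i : Fin n, (X i : MvPolynomial (Fin n) ℝ) ^ m i) = monomial (e m) 1 := by
  rw [← prod_X_pow_eq_monomial]
  refine (Finset.prod_subset (Finset.subset_univ _) ?_).symm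
  intro i _ hi
  have h : e m i = 0 := Finsupp.notMem_support_iff.mp hi
  rw [show (e m) i = m i from rfl] at h
  rw [h, pow_zero]

lemma coeff_sumX_pow {k : ℕ} (γ : Fin n →₀ ℕ) (h : ∑ i, γ i = k) :
    coeff γ ((∑ i : Fin n, (X i : MvPolynomial (Fin n) ℝ)) ^ k)
      = (Nat.multinomial Finset.univ ⇑γ : ℝ) := by
  rw [Finset.sum_pow_eq_sum_piAntidiag, MvPolynomial.coeff_sum]
  have h1 : ∀ m ∈ Finset.piAntidiag Finset.univ k,
      coeff γ ((Nat.multinomial Finset.univ m : MvPolynomial (Fin n) ℝ) * ∏ i, X i ^ m i)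
        = if m = ⇑γ then (Nat.multinomial Finset.univ m : ℝ) else 0 := by
    intro m _
    rw [prodXpow, ← map_natCast (C : ℝ →+* MvPolynomial (Fin n) ℝ), C_mul_monomial, mul_one,
      coeff_monomial]
    simp only [e_eq_iff]
  rw [Finset.sum_congr rfl h1, Finset.sum_ite_eq' (Finset.piAntidiag Finset.univ k) ⇑γ
    (fun m => (Nat.multinomial Finset.univ m : ℝ))]
  rw [if_pos (Finset.mem_piAntidiag.mpr ⟨h, fun _ _ => Finset.mem_univ _⟩)]

lemma decomp {d : ℕ} (f : MvPolynomial (Fin n) ℝ)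
    (hs : ∀ γ : Fin n →₀ ℕ, coeff γ f ≠ 0 → ∑ i, γ i = d) :
    f = ∑ m ∈ Finset.piAntidiag Finset.univ d, monomial (e m) (coeff (e m) f) := by
  apply MvPolynomial.ext
  intro γ
  rw [coeff_sum]
  have h1 : ∀ m ∈ Finset.piAntidiag Finset.univ d,
      coeff γ (monomial (e m) (coeff (e m) f))
        = if m = ⇑γ then coeff (e m) f else 0 := by
    intro m _
    rw [coeff_monomial]
    simp only [e_eq_iff]
  rw [Finset.sum_congr rfl h1, Finset.sum_ite_eq' (Finset.piAntidiag Finset.univ d) ⇑γ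
    (fun m => coeff (e m) f)]
  by_cases hγ : ⇑γ ∈ Finset.piAntidiag Finset.univ d
  · rw [if_pos hγ, e_coe]
  · rw [if_neg hγ]
    by_contra hc
    exact hγ (Finset.mem_piAntidiag.mpr ⟨hs γ hc, fun _ _ => Finset.mem_univ _⟩)

lemma lemA {d k : ℕ} (f : MvPolynomial (Fin n) ℝ)
    (hs : ∀ γ : Fin n →₀ ℕ, coeff γ f ≠ 0 → ∑ i, γ i = d)
    (β : Fin n →₀ ℕ) (hβ : ∑ i, β i = d + k) :
    coeff β ((∑ i, X i) ^ k * f) * ∏ i, ((β i).factorial : ℝ)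
      = (k.factorial : ℝ) * ∑ m ∈ Finset.piAntidiag Finset.univ d,
          coeff (e m) f * ∏ i, ((β i).descFactorial (m i) : ℝ) := by
  conv_lhs => rw [decomp f hs]
  rw [Finset.mul_sum, coeff_sum, Finset.sum_mul, Finset.mul_sum]
  refine Finset.sum_congr rfl ?_
  intro m hm
  obtain ⟨hm1, -⟩ := Finset.mem_piAntidiag.mp hm
  rw [coeff_mul_monomial']
  by_cases hle : e m ≤ β
  · rw [if_pos hle]
    have hmle : ∀ i, m i ≤ β i := fun i => hle i
    have happ : ∀ i, (β - e m) i = β i - m i := fun i => rfl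
    have hsum : ∑ i, (β - e m) i = k := by
      rw [Finset.sum_congr rfl fun i _ => happ i,
        Finset.sum_tsub_distrib Finset.univ fun i _ => hmle i]
      have h1 : ∑ i, β i = d + k := hβ
      have h2 : ∑ i, m i = d := hm1
      omega
    rw [coeff_sumX_pow (β - e m) hsum]
    have hnat : (Nat.multinomial Finset.univ ⇑(β - e m)) * ∏ i, (β i).factorial
        = k.factorial * ∏ i, (β i).descFactorial (m i) := by
      have hfac : ∀ i : Fin n, (β i).factorial
          = (β i - m i).factorial * (β i).descFactorial (m i) :=
        fun i => (Nat.factorial_mul_descFactorial (hmle i)).symm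
      have hspec := Nat.multinomial_spec Finset.univ ⇑(β - e m)
      rw [hsum] at hspec
      calc (Nat.multinomial Finset.univ ⇑(β - e m)) * ∏ i, (β i).factorial
          = (Nat.multinomial Finset.univ ⇑(β - e m))
            * ((∏ i, (β i - m i).factorial) * ∏ i, (β i).descFactorial (m i)) := by
            rw [← Finset.prod_mul_distrib]
            exact congrArg _ (Finset.prod_congr rfl fun i _ => hfac i)
        _ = ((∏ i, ((β - e m) i).factorial) * Nat.multinomial Finset.univ ⇑(β - e m))
            * ∏ i, (β i).descFactorial (m i) := by
            rw [Finset.prod_congr rfl fun i (_ : i ∈ univ) => congrArg Nat.factorial (happ i)]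
            ring
        _ = k.factorial * ∏ i, (β i).descFactorial (m i) := by rw [hspec]
    have hcast : (Nat.multinomial Finset.univ ⇑(β - e m) : ℝ) * ∏ i, ((β i).factorial : ℝ)
        = (k.factorial : ℝ) * ∏ i, ((β i).descFactorial (m i) : ℝ) := by
      exact_mod_cast congrArg (Nat.cast (R := ℝ)) hnat
    linear_combination (coeff (e m) f) * hcast
  · rw [if_neg hle]
    obtain ⟨i, hi⟩ : ∃ i, β i < m i := by
      by_contra hcon
      push_neg at hcon
      exact hle fun i => hcon i
    have hz : ((β i).descFactorial (m i) : ℝ) = 0 := by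
      rw [Nat.descFactorial_of_lt hi]; norm_num
    have hz2 : ∏ i, ((β i).descFactorial (m i) : ℝ) = 0 :=
      Finset.prod_eq_zero (Finset.mem_univ i) hz
    rw [hz2]
    ring

lemma pow_sub_prod_le : ∀ (m : ℕ) (x : ℝ), (m : ℝ) ≤ x →
    x ^ (m + 1) - ∏ j ∈ Finset.range (m + 1), (x - j) ≤ ((m : ℝ) * (m + 1) / 2) * x ^ m := by
  intro m
  induction m with
  | zero => intro x hx; simp
  | succ p ih =>
    intro x hx
    have hx0 : (0 : ℝ) ≤ x := le_trans (by positivity) hx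
    have hxp : (p : ℝ) ≤ x := by push_cast at hx ⊢; linarith
    have hfac : ∀ j ∈ Finset.range (p + 1), (0 : ℝ) ≤ x - j := by
      intro j hj
      have : (j : ℝ) ≤ p := by exact_mod_cast Nat.le_of_lt_succ (Finset.mem_range.mp hj)
      linarith
    have hP0 : 0 ≤ ∏ j ∈ Finset.range (p + 1), (x - (j : ℝ)) := Finset.prod_nonneg hfac
    have hPle : ∏ j ∈ Finset.range (p + 1), (x - (j : ℝ)) ≤ x ^ (p + 1) := by
      calc ∏ j ∈ Finset.range (p + 1), (x - (j : ℝ)) ≤ ∏ _j ∈ Finset.range (p + 1), x :=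
            Finset.prod_le_prod hfac (fun j hj => by
              have : (0:ℝ) ≤ j := by positivity
              linarith)
        _ = x ^ (p + 1) := by rw [Finset.prod_const, Finset.card_range]
    have ihx := ih x hxp
    rw [Finset.prod_range_succ]
    push_cast
    have key2 : x ^ (p + 1 + 1) - x * ∏ j ∈ Finset.range (p + 1), (x - (j : ℝ))
        ≤ (p : ℝ) * ((p : ℝ) + 1) / 2 * x ^ (p + 1) := by
      calc x ^ (p + 1 + 1) - x * ∏ j ∈ Finset.range (p + 1), (x - (j : ℝ))
          = x * (x ^ (p + 1) - ∏ j ∈ Finset.range (p + 1), (x - (j : ℝ))) := by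
            rw [pow_succ x (p + 1)]; ring
        _ ≤ x * ((p : ℝ) * ((p : ℝ) + 1) / 2 * x ^ p) := mul_le_mul_of_nonneg_left ihx hx0
        _ = (p : ℝ) * ((p : ℝ) + 1) / 2 * x ^ (p + 1) := by rw [pow_succ x p]; ring
    have key3 : ((p : ℝ) + 1) * ∏ j ∈ Finset.range (p + 1), (x - (j : ℝ))
        ≤ ((p : ℝ) + 1) * x ^ (p + 1) :=
      mul_le_mul_of_nonneg_left hPle (by positivity)
    linarith [key2, key3]

lemma descFactorial_cast {N d : ℕ} (h : d ≤ N) :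
    (N.descFactorial d : ℝ) = ∏ j ∈ Finset.range d, ((N : ℝ) - j) := by
  rw [Nat.descFactorial_eq_prod_range, Nat.cast_prod]
  refine Finset.prod_congr rfl fun j hj => ?_
  have : j ≤ N := le_of_lt (lt_of_lt_of_le (Finset.mem_range.mp hj) h)
  exact Nat.cast_sub this

lemma homog_sum_eq {d : ℕ} {p : MvPolynomial (Fin n) ℝ} (hp : p.IsHomogeneous d) :
    ∀ γ : Fin n →₀ ℕ, coeff γ p ≠ 0 → ∑ i, γ i = d := by
  intro γ hγ
  have h1 : (Finsupp.weight 1) γ = d := hp hγ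
  change Finsupp.weight (fun _ => 1) γ = d at h1
  rw [← Finsupp.degree_eq_weight_one] at h1
  rw [← h1]
  exact (Finset.sum_subset (Finset.subset_univ _)
    fun i _ hi => Finsupp.notMem_support_iff.mp hi).symm

end PolyaAux

namespace PolyaAux

lemma le_B {d : ℕ} (f : MvPolynomial (Fin n) ℝ) (m : Fin n → ℕ) (hm : ∑ i, m i = d) :
    ((∏ i, Nat.factorial (m i) : ℕ) : ℝ) / (Nat.factorial d : ℝ) * coeff (e m) f
      ≤ Bcoef d f := by
  apply le_csSup
  · apply BddAbove.mono (s := _) ?_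
      (Set.Finite.bddAbove (((Finset.piAntidiag (Finset.univ : Finset (Fin n)) d).finite_toSet.image
        (fun m : Fin n → ℕ =>
          ((∏ i, Nat.factorial (m i) : ℕ) : ℝ) / (Nat.factorial d : ℝ) * coeff (e m) f))))
    rintro c ⟨α, hα, rfl⟩
    refine ⟨⇑α, ?_, by simp only [e_coe]⟩
    exact Finset.mem_coe.mpr (Finset.mem_piAntidiag.mpr ⟨hα, fun _ _ => Finset.mem_univ _⟩)
  · exact ⟨e m, hm, rfl⟩

end PolyaAux

set_option maxHeartbeats 1000000 in
open PolyaAux in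
/-- **Theorem (quantitative Pólya Positivstellensatz).**
Let `f` be homogeneous of degree `d` with minimum `ε > 0` over the standard simplex.
If `k > (d(d-1)/2)·(B(f)/ε) - d`, then all coefficients of `(x₁ + ⋯ + xₙ)^k f` are
positive. -/
theorem polya_positivstellensatz_quantitative
    {n d : ℕ} (hn : 0 < n) (f : MvPolynomial (Fin n) ℝ) (hf : f.IsHomogeneous d)
    (ε : ℝ)
    (hε : ε = sInf ((fun x => eval x f) ''
      {x : Fin n → ℝ | (∀ i, 0 ≤ x i) ∧ ∑ i, x i = 1}))
    (hεpos : 0 < ε)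
    (k : ℕ)
    (hk : (k : ℝ) > ((d : ℝ) * ((d : ℝ) - 1) / 2) * (Bcoef d f / ε) - (d : ℝ)) :
    ∀ β : Fin n →₀ ℕ, (∑ i, β i) = d + k →
      0 < coeff β ((∑ i, X i) ^ k * f) := by
  intro β hβ
  have hs : ∀ γ : Fin n →₀ ℕ, coeff γ f ≠ 0 → ∑ i, γ i = d := homog_sum_eq hf
  set B := Bcoef d f with hBdef
  -- positivity of total degree
  have hN1 : 0 < d + k := by
    by_contra h0
    push_neg at h0
    have hd0 : d = 0 := by omega
    have hk0 : k = 0 := by omega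
    rw [hd0, hk0] at hk
    norm_num at hk
  have hNpos : (0 : ℝ) < ((d + k : ℕ) : ℝ) := by exact_mod_cast hN1
  -- Vandermonde identity
  have hgd : ((∑ i : Fin n, X i : MvPolynomial (Fin n) ℝ) ^ d).IsHomogeneous d := by
    have hg1 : MvPolynomial.IsHomogeneous (∑ i : Fin n, (X i : MvPolynomial (Fin n) ℝ)) 1 :=
      MvPolynomial.IsHomogeneous.sum _ _ _ (fun i _ => isHomogeneous_X _ i)
    simpa using hg1.pow d
  have hVan := lemA ((∑ i : Fin n, X i) ^ d) (homog_sum_eq hgd) β hβ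
  rw [← pow_add] at hVan
  rw [coeff_sumX_pow β (by omega)] at hVan
  have hVanrw : ∀ m ∈ Finset.piAntidiag (Finset.univ : Finset (Fin n)) d,
      coeff (e m) ((∑ i : Fin n, X i) ^ d) * ∏ i, ((β i).descFactorial (m i) : ℝ)
        = (Nat.multinomial Finset.univ m : ℝ) * ∏ i, ((β i).descFactorial (m i) : ℝ) := by
    intro m hm
    obtain ⟨hm1, -⟩ := Finset.mem_piAntidiag.mp hm
    rw [coeff_sumX_pow (e m) hm1, e_coeFn]
  rw [Finset.sum_congr rfl hVanrw] at hVan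
  have hVan2 : ∑ m ∈ Finset.piAntidiag (Finset.univ : Finset (Fin n)) d,
      (Nat.multinomial Finset.univ m : ℝ) * ∏ i, ((β i).descFactorial (m i) : ℝ)
        = ((d + k).descFactorial d : ℝ) := by
    have h1 : (∏ i, (β i).factorial) * Nat.multinomial Finset.univ ⇑β = (d + k).factorial := by
      have h := Nat.multinomial_spec Finset.univ ⇑β
      rwa [hβ] at h
    have h2 : k.factorial * ((d + k).descFactorial d) = (d + k).factorial := by
      have h := Nat.factorial_mul_descFactorial (show d ≤ d + k by omega)
      simpa [show d + k - d = k by omega] using h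
    have h3 : (Nat.multinomial Finset.univ ⇑β : ℝ) * ∏ i, ((β i).factorial : ℝ)
        = (k.factorial : ℝ) * ((d + k).descFactorial d : ℝ) := by
      exact_mod_cast congrArg (Nat.cast (R := ℝ)) (by rw [mul_comm, h1, ← h2])
    have hk0 : (k.factorial : ℝ) ≠ 0 := by positivity
    apply mul_left_cancel₀ hk0
    rw [← hVan, h3]
  -- multinomial theorem (numeric)
  have hMul : ∑ m ∈ Finset.piAntidiag (Finset.univ : Finset (Fin n)) d,
      (Nat.multinomial Finset.univ m : ℝ) * ∏ i, ((β i : ℕ) : ℝ) ^ (m i)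
        = ((d + k : ℕ) : ℝ) ^ d := by
    calc ∑ m ∈ Finset.piAntidiag (Finset.univ : Finset (Fin n)) d,
        (Nat.multinomial Finset.univ m : ℝ) * ∏ i, ((β i : ℕ) : ℝ) ^ (m i)
        = (∑ i, ((β i : ℕ) : ℝ)) ^ d :=
          (Finset.sum_pow_eq_sum_piAntidiag (Finset.univ : Finset (Fin n))
            (fun i => ((β i : ℕ) : ℝ)) d).symm
      _ = ((d + k : ℕ) : ℝ) ^ d := by rw [← Nat.cast_sum, hβ]
  -- eval expansion
  have hEval : ∀ x : Fin n → ℝ, eval x f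
      = ∑ m ∈ Finset.piAntidiag (Finset.univ : Finset (Fin n)) d,
          coeff (e m) f * ∏ i, x i ^ (m i) := by
    intro x
    conv_lhs => rw [decomp f hs]
    rw [map_sum]
    refine Finset.sum_congr rfl fun m hm => ?_
    rw [eval_monomial]
    rw [Finsupp.prod_fintype]
    · rfl
    · intro i; exact pow_zero _
  -- coefficient bound
  have haB : ∀ m ∈ Finset.piAntidiag (Finset.univ : Finset (Fin n)) d,
      coeff (e m) f ≤ B * (Nat.multinomial Finset.univ m : ℝ) := by
    intro m hm
    obtain ⟨hm1, -⟩ := Finset.mem_piAntidiag.mp hm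
    have h1 := le_B f m hm1
    rw [Nat.cast_prod] at h1
    have hprodpos : (0 : ℝ) < ∏ i, ((m i).factorial : ℝ) := by positivity
    have hd0 : (0 : ℝ) < (d.factorial : ℝ) := by positivity
    have h2 : (Nat.multinomial Finset.univ m : ℝ) * ∏ i, ((m i).factorial : ℝ)
        = (d.factorial : ℝ) := by
      have h := Nat.multinomial_spec Finset.univ m
      rw [hm1] at h
      exact_mod_cast congrArg (Nat.cast (R := ℝ)) (by rw [mul_comm, h])
    have hmult : (Nat.multinomial Finset.univ m : ℝ)
        = (d.factorial : ℝ) / ∏ i, ((m i).factorial : ℝ) := by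
      rw [eq_div_iff (ne_of_gt hprodpos)]; exact h2
    have h3 := mul_le_mul_of_nonneg_left h1 (le_of_lt (div_pos hd0 hprodpos))
    have hL : (d.factorial : ℝ) / (∏ i, ((m i).factorial : ℝ))
        * ((∏ i, ((m i).factorial : ℝ)) / (d.factorial : ℝ) * coeff (e m) f)
        = coeff (e m) f := by
      field_simp
    rw [hL] at h3
    rw [hmult]
    nlinarith [h3]
  -- nonnegativity of the monomial-descFactorial gap
  have hgap : ∀ m : Fin n → ℕ, (0 : ℝ) ≤ ∏ i, ((β i : ℕ) : ℝ) ^ (m i)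
      - ∏ i, ((β i).descFactorial (m i) : ℝ) := by
    intro m
    have h : (∏ i, (β i).descFactorial (m i) : ℕ) ≤ ∏ i, (β i) ^ (m i) :=
      Finset.prod_le_prod (fun _ _ => Nat.zero_le _)
        (fun i _ => Nat.descFactorial_le_pow _ _)
    have h' : (∏ i, ((β i).descFactorial (m i) : ℝ)) ≤ ∏ i, ((β i : ℕ) : ℝ) ^ (m i) := by
      exact_mod_cast h
    linarith
  -- lower bound on evaluation
  have hεle : ∀ x : Fin n → ℝ, (∀ i, 0 ≤ x i) → (∑ i, x i = 1) → ε ≤ eval x f := by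
    intro x h1 h2
    have hset : {x : Fin n → ℝ | (∀ i, 0 ≤ x i) ∧ ∑ i, x i = 1} = stdSimplex ℝ (Fin n) := rfl
    have hbdd : BddBelow ((fun x => eval x f) ''
        {x : Fin n → ℝ | (∀ i, 0 ≤ x i) ∧ ∑ i, x i = 1}) := by
      rw [hset]
      exact ((isCompact_stdSimplex ℝ (Fin n)).image (MvPolynomial.continuous_eval f)).bddBelow
    rw [hε]
    exact csInf_le hbdd ⟨x, ⟨h1, h2⟩, rfl⟩
  have hEvalLB : ((d + k : ℕ) : ℝ) ^ d * ε ≤ eval (fun i => ((β i : ℕ) : ℝ)) f := by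
    set w : Fin n → ℝ := fun i => ((β i : ℕ) : ℝ) / ((d + k : ℕ) : ℝ) with hw
    have hw1 : ∀ i, 0 ≤ w i := fun i => by rw [hw]; positivity
    have hw2 : ∑ i, w i = 1 := by
      rw [hw, ← Finset.sum_div, ← Nat.cast_sum, hβ, div_self (ne_of_gt hNpos)]
    have hweval : eval (fun i => ((β i : ℕ) : ℝ)) f = ((d + k : ℕ) : ℝ) ^ d * eval w f := by
      rw [hEval, hEval, Finset.mul_sum]
      refine Finset.sum_congr rfl fun m hm => ?_
      obtain ⟨hm1, -⟩ := Finset.mem_piAntidiag.mp hm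
      have hdis : ∏ i, w i ^ (m i)
          = (∏ i, ((β i : ℕ) : ℝ) ^ (m i)) / ((d + k : ℕ) : ℝ) ^ d := by
        rw [hw]
        simp only [div_pow]
        rw [Finset.prod_div_distrib, Finset.prod_pow_eq_pow_sum, hm1]
      have hNd : ((d + k : ℕ) : ℝ) ^ d ≠ 0 := ne_of_gt (pow_pos hNpos d)
      rw [hdis, div_eq_inv_mul]
      calc coeff (e m) f * ∏ i, ((β i : ℕ) : ℝ) ^ (m i)
          = (((d + k : ℕ) : ℝ) ^ d * (((d + k : ℕ) : ℝ) ^ d)⁻¹)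
            * (coeff (e m) f * ∏ i, ((β i : ℕ) : ℝ) ^ (m i)) := by
            rw [mul_inv_cancel₀ hNd, one_mul]
        _ = ((d + k : ℕ) : ℝ) ^ d
            * (coeff (e m) f * ((((d + k : ℕ) : ℝ) ^ d)⁻¹
              * ∏ i, ((β i : ℕ) : ℝ) ^ (m i))) := by ring
    rw [hweval]
    exact mul_le_mul_of_nonneg_left (hεle w hw1 hw2) (le_of_lt (pow_pos hNpos d))
  -- the key sum S
  have hA := lemA f hs β hβ
  set S := ∑ m ∈ Finset.piAntidiag (Finset.univ : Finset (Fin n)) d,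
      coeff (e m) f * ∏ i, ((β i).descFactorial (m i) : ℝ) with hSdef
  -- split S
  have hSsplit : S = eval (fun i => ((β i : ℕ) : ℝ)) f
      - ∑ m ∈ Finset.piAntidiag (Finset.univ : Finset (Fin n)) d,
          coeff (e m) f * (∏ i, ((β i : ℕ) : ℝ) ^ (m i)
            - ∏ i, ((β i).descFactorial (m i) : ℝ)) := by
    rw [hEval, ← Finset.sum_sub_distrib, hSdef]
    exact Finset.sum_congr rfl fun m _ => by ring
  have hT : ∑ m ∈ Finset.piAntidiag (Finset.univ : Finset (Fin n)) d,
      coeff (e m) f * (∏ i, ((β i : ℕ) : ℝ) ^ (m i)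
        - ∏ i, ((β i).descFactorial (m i) : ℝ))
      ≤ B * (((d + k : ℕ) : ℝ) ^ d - ((d + k).descFactorial d : ℝ)) := by
    calc ∑ m ∈ Finset.piAntidiag (Finset.univ : Finset (Fin n)) d,
        coeff (e m) f * (∏ i, ((β i : ℕ) : ℝ) ^ (m i)
          - ∏ i, ((β i).descFactorial (m i) : ℝ))
        ≤ ∑ m ∈ Finset.piAntidiag (Finset.univ : Finset (Fin n)) d,
          B * (Nat.multinomial Finset.univ m : ℝ) * (∏ i, ((β i : ℕ) : ℝ) ^ (m i)
            - ∏ i, ((β i).descFactorial (m i) : ℝ)) :=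
          Finset.sum_le_sum fun m hm =>
            mul_le_mul_of_nonneg_right (haB m hm) (hgap m)
      _ = B * (((d + k : ℕ) : ℝ) ^ d - ((d + k).descFactorial d : ℝ)) := by
          rw [← hMul, ← hVan2, ← Finset.sum_sub_distrib, Finset.mul_sum]
          exact Finset.sum_congr rfl fun m _ => by ring
  have hSge : ((d + k : ℕ) : ℝ) ^ d * ε
      - B * (((d + k : ℕ) : ℝ) ^ d - ((d + k).descFactorial d : ℝ)) ≤ S := by
    rw [hSsplit]
    have := hEvalLB
    linarith [hT]
  -- S is positive
  have hSpos : 0 < S := by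
    have hdesc_le : ((d + k).descFactorial d : ℝ) ≤ ((d + k : ℕ) : ℝ) ^ d := by
      exact_mod_cast Nat.descFactorial_le_pow (d + k) d
    rcases le_or_gt B 0 with hB0 | hB0
    · have : 0 ≤ -B * (((d + k : ℕ) : ℝ) ^ d - ((d + k).descFactorial d : ℝ)) := by
        apply mul_nonneg (by linarith) (by linarith)
      have hpow : (0 : ℝ) < ((d + k : ℕ) : ℝ) ^ d := pow_pos hNpos d
      nlinarith [hSge, mul_pos hpow hεpos]
    · -- B > 0
      have hkey : ((d : ℝ) * ((d : ℝ) - 1) / 2) * B < ((d + k : ℕ) : ℝ) * ε := by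
        have h1 : ((d : ℝ) * ((d : ℝ) - 1) / 2) * (B / ε) < (k : ℝ) + (d : ℝ) := by linarith
        have h2 := mul_lt_mul_of_pos_right h1 hεpos
        have h3 : ((d : ℝ) * ((d : ℝ) - 1) / 2) * (B / ε) * ε
            = ((d : ℝ) * ((d : ℝ) - 1) / 2) * B := by
          field_simp
        rw [h3] at h2
        have h4 : ((d + k : ℕ) : ℝ) = (k : ℝ) + (d : ℝ) := by push_cast; ring
        rw [h4]
        linarith
      rcases Nat.eq_zero_or_pos d with hd0 | hdpos
      · have e1 : ((d + k : ℕ) : ℝ) ^ d = 1 := by rw [hd0, pow_zero]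
        have e2 : ((d + k).descFactorial d : ℝ) = 1 := by
          rw [hd0, Nat.descFactorial_zero, Nat.cast_one]
        rw [e1, e2] at hSge
        linarith [hSge, hεpos]
      · obtain ⟨p, rfl⟩ : ∃ p, d = p + 1 := ⟨d - 1, by omega⟩
        have hpN : (p : ℝ) ≤ ((p + 1 + k : ℕ) : ℝ) := by
          push_cast
          linarith [Nat.cast_nonneg (α := ℝ) k]
        have hlem := pow_sub_prod_le p (((p + 1 + k : ℕ) : ℝ)) hpN
        have hdesc : ((p + 1 + k).descFactorial (p + 1) : ℝ)
            = ∏ j ∈ Finset.range (p + 1), (((p + 1 + k : ℕ) : ℝ) - j) :=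
          descFactorial_cast (by omega)
        rw [← hdesc] at hlem
        -- N^d - desc ≤ (p(p+1)/2) N^p
        have hBmul := mul_le_mul_of_nonneg_left hlem (le_of_lt hB0)
        have hppos : (0 : ℝ) < ((p + 1 + k : ℕ) : ℝ) ^ p := pow_pos hNpos p
        have hsucc : ((p + 1 + k : ℕ) : ℝ) ^ (p + 1)
            = ((p + 1 + k : ℕ) : ℝ) ^ p * ((p + 1 + k : ℕ) : ℝ) := pow_succ _ p
        have hd' : (((p + 1 : ℕ) : ℝ)) * (((p + 1 : ℕ) : ℝ) - 1) / 2
            = (p : ℝ) * ((p : ℝ) + 1) / 2 := by push_cast; ring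
        rw [hd'] at hkey
        -- combine
        nlinarith [hSge, hBmul, hppos, mul_lt_mul_of_pos_right hkey hppos, hεpos]
  -- conclude
  have hPpos : (0 : ℝ) < ∏ i, ((β i).factorial : ℝ) := by positivity
  have hkS : (0 : ℝ) < (k.factorial : ℝ) * S := by positivity
  by_contra hcon
  push_neg at hcon
  nlinarith [hA, hPpos, hkS, mul_nonpos_of_nonpos_of_nonneg hcon (le_of_lt hPpos)]
end

section
/- Let L be a linear functional on the real polynomial ring in n variables satisfying L(x^α) ≥ 0 for all multi-indices α, L(1) ≤ 1, and L( p·(1 − x_1 − ... − x_n) ) = 0 for every polynomial p. Then for every polynomial f, |L(f)| ≤ sup_{x ∈ Δ_{n−1}} |f(x)|; in particular L is bounded (continuous) with respect to the supremum norm on the simplex. -/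
open Finset Filter

lemma prod_sub_prod_le_sum {β : Type*} (s : Finset β) (u w : β → ℝ)
    (hu : ∀ k ∈ s, 0 ≤ u k) (huw : ∀ k ∈ s, u k ≤ w k) (hw : ∀ k ∈ s, w k ≤ 1) :
    ∏ k ∈ s, w k - ∏ k ∈ s, u k ≤ ∑ k ∈ s, (w k - u k) := by
  induction s using Finset.cons_induction with
  | empty => simp
  | cons a s ha ih =>
    rw [prod_cons, prod_cons, sum_cons]
    have h1 : ∀ k ∈ s, 0 ≤ u k := fun k hk => hu k (mem_cons_of_mem hk)
    have h2 : ∀ k ∈ s, u k ≤ w k := fun k hk => huw k (mem_cons_of_mem hk)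
    have h3 : ∀ k ∈ s, w k ≤ 1 := fun k hk => hw k (mem_cons_of_mem hk)
    have hps : ∏ k ∈ s, u k ≤ ∏ k ∈ s, w k := Finset.prod_le_prod h1 h2
    have hu0 : (0:ℝ) ≤ ∏ k ∈ s, u k := Finset.prod_nonneg h1
    have hu1 : ∏ k ∈ s, u k ≤ 1 := by
      calc ∏ k ∈ s, u k ≤ ∏ k ∈ s, w k := hps
      _ ≤ 1 := Finset.prod_le_one (fun k hk => le_trans (h1 k hk) (h2 k hk)) h3
    have hwa1 : w a ≤ 1 := hw a (mem_cons_self a s)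
    have huwa : u a ≤ w a := huw a (mem_cons_self a s)
    have key : w a * ∏ k ∈ s, w k - u a * ∏ k ∈ s, u k
        = w a * (∏ k ∈ s, w k - ∏ k ∈ s, u k) + (w a - u a) * ∏ k ∈ s, u k := by ring
    rw [key]
    have t1 : w a * (∏ k ∈ s, w k - ∏ k ∈ s, u k) ≤ ∑ k ∈ s, (w k - u k) := by
      calc w a * (∏ k ∈ s, w k - ∏ k ∈ s, u k) ≤ 1 * (∏ k ∈ s, w k - ∏ k ∈ s, u k) :=
            mul_le_mul_of_nonneg_right hwa1 (by linarith)
      _ = ∏ k ∈ s, w k - ∏ k ∈ s, u k := one_mul _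
      _ ≤ _ := ih h1 h2 h3
    have t2 : (w a - u a) * ∏ k ∈ s, u k ≤ w a - u a := by
      calc (w a - u a) * ∏ k ∈ s, u k ≤ (w a - u a) * 1 :=
            mul_le_mul_of_nonneg_left hu1 (by linarith)
      _ = w a - u a := mul_one _
    linarith

lemma multinomial_descFactorial_identity {n : ℕ} (g a : Fin n → ℕ) (h : ∀ i, a i ≤ g i) :
    Nat.multinomial univ g * ∏ i, (g i).descFactorial (a i)
      = Nat.multinomial univ (g - a) * (∑ i, g i).descFactorial (∑ i, a i) := by
  have hsum : ∑ i, a i ≤ ∑ i, g i := Finset.sum_le_sum fun i _ => h i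
  have hsub : ∑ i, (g - a) i = ∑ i, g i - ∑ i, a i := by
    simp only [Pi.sub_apply]
    exact Finset.sum_tsub_distrib univ (fun i _ => h i)
  have hP : 0 < ∏ i, ((g - a) i).factorial := Finset.prod_pos fun i _ => Nat.factorial_pos _
  apply Nat.eq_of_mul_eq_mul_left hP
  have e1 : ∀ i : Fin n, ((g - a) i).factorial * (g i).descFactorial (a i) = (g i).factorial :=
    fun i => by simpa [Pi.sub_apply] using Nat.factorial_mul_descFactorial (h i)
  calc (∏ i, ((g - a) i).factorial) * (Nat.multinomial univ g * ∏ i, (g i).descFactorial (a i))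
      = (∏ i, (((g - a) i).factorial * (g i).descFactorial (a i))) * Nat.multinomial univ g := by
        rw [prod_mul_distrib]; ring
    _ = (∏ i, (g i).factorial) * Nat.multinomial univ g := by
        congr 1; exact Finset.prod_congr rfl fun i _ => e1 i
    _ = (∑ i, g i).factorial := Nat.multinomial_spec _ _
    _ = (∑ i, g i - ∑ i, a i).factorial * (∑ i, g i).descFactorial (∑ i, a i) :=
        (Nat.factorial_mul_descFactorial hsum).symm
    _ = (∑ i, (g - a) i).factorial * (∑ i, g i).descFactorial (∑ i, a i) := by rw [hsub]
    _ = ((∏ i, ((g - a) i).factorial) * Nat.multinomial univ (g - a))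
          * (∑ i, g i).descFactorial (∑ i, a i) := by rw [Nat.multinomial_spec]
    _ = (∏ i, ((g - a) i).factorial)
          * (Nat.multinomial univ (g - a) * (∑ i, g i).descFactorial (∑ i, a i)) := by ring

lemma tendsto_descFactorial_div_pow (D : ℕ) :
    Tendsto (fun N : ℕ => (N.descFactorial D : ℝ) / (N : ℝ) ^ D) atTop (nhds 1) := by
  have key : Tendsto (fun N : ℕ => ∏ j ∈ range D, (1 - (j : ℝ) / N)) atTop (nhds 1) := by
    have : Tendsto (fun N : ℕ => ∏ j ∈ range D, (1 - (j : ℝ) / N)) atTop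
        (nhds (∏ _j ∈ range D, (1:ℝ))) := by
      apply tendsto_finset_prod
      intro j _
      have h0 : Tendsto (fun N : ℕ => (j : ℝ) / N) atTop (nhds 0) :=
        tendsto_const_div_atTop_nhds_zero_nat (j : ℝ)
      simpa using h0.const_sub 1
    simpa using this
  apply key.congr'
  filter_upwards [eventually_ge_atTop D, eventually_ge_atTop 1] with N hND hN1
  have hN0 : (N : ℝ) ≠ 0 := by positivity
  rw [Nat.descFactorial_eq_prod_range]
  rw [Nat.cast_prod]
  have hpow : (N : ℝ) ^ D = ∏ _j ∈ range D, (N : ℝ) := by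
    rw [prod_const, card_range]
  rw [hpow, ← Finset.prod_div_distrib]
  apply Finset.prod_congr rfl
  intro j hj
  have hjN : j ≤ N := le_trans (le_of_lt (mem_range.mp hj)) hND
  rw [Nat.cast_sub hjN]
  field_simp

lemma tendsto_pow_div_descFactorial_sub_one (D : ℕ) :
    Tendsto (fun N : ℕ => ((N : ℝ) ^ D / (N.descFactorial D : ℝ) - 1)) atTop (nhds 0) := by
  have h1 := (tendsto_descFactorial_div_pow D).inv₀ one_ne_zero
  simp only [inv_div, inv_one] at h1
  simpa using h1.sub_const 1

lemma bernstein_weight_est {n : ℕ} (N : ℕ) (hN : 1 ≤ N) (g : Fin n → ℕ) (hg : ∑ i, g i = N)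
    (a : Fin n → ℕ) (hD : ∑ i, a i ≤ N) :
    |(∏ i, ((g i).descFactorial (a i) : ℝ)) / ((N.descFactorial (∑ i, a i) : ℝ))
        - ∏ i, ((g i : ℝ) / N) ^ a i|
      ≤ (((∑ i, a i : ℕ)) : ℝ) ^ 2 / N
        + ((N : ℝ) ^ (∑ i, a i) / (N.descFactorial (∑ i, a i) : ℝ) - 1) := by
  set D := ∑ i, a i with hDdef
  have hNpos : (0 : ℝ) < N := by exact_mod_cast hN
  have hB0 : (0 : ℝ) < (N.descFactorial D : ℝ) := by
    have : N.descFactorial D ≠ 0 := by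
      rw [Ne, Nat.descFactorial_eq_zero_iff_lt]; omega
    exact_mod_cast Nat.pos_of_ne_zero this
  have hBN : (N.descFactorial D : ℝ) ≤ (N : ℝ) ^ D := by
    exact_mod_cast Nat.descFactorial_le_pow N D
  have hgN : ∀ i, g i ≤ N := by
    intro i
    rw [← hg]
    exact Finset.single_le_sum (f := g) (fun _ _ => Nat.zero_le _) (mem_univ i)
  set A := ∏ i, ((g i).descFactorial (a i) : ℝ) with hAdef
  set B := (N.descFactorial D : ℝ) with hBdef
  set P := ∏ i, ((g i : ℝ) / N) ^ a i with hPdef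
  set Q := A / (N : ℝ) ^ D with hQdef
  -- sigma representation
  set T := (univ : Finset (Fin n)).sigma (fun i => Finset.range (a i)) with hTdef
  have hQprod : Q = ∏ p ∈ T, ((g p.1 - p.2 : ℕ) : ℝ) / N := by
    rw [hQdef, hAdef]
    have hA : ∏ i, ((g i).descFactorial (a i) : ℝ)
        = ∏ i, ∏ j ∈ range (a i), ((g i - j : ℕ) : ℝ) := by
      apply Finset.prod_congr rfl
      intro i _
      rw [Nat.descFactorial_eq_prod_range, Nat.cast_prod]
    have hNp : (N : ℝ) ^ D = ∏ i, ∏ _j ∈ range (a i), (N : ℝ) := by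
      simp only [prod_const, card_range]
      rw [Finset.prod_pow_eq_pow_sum]
    rw [hA, hNp, ← Finset.prod_div_distrib]
    rw [Finset.prod_sigma]
    apply Finset.prod_congr rfl
    intro i _
    rw [Finset.prod_div_distrib]
  have hPprod : P = ∏ p ∈ T, (g p.1 : ℝ) / N := by
    rw [hPdef, Finset.prod_sigma]
    apply Finset.prod_congr rfl
    intro i _
    simp [prod_const, card_range, div_pow]
  have hu0 : ∀ p ∈ T, (0:ℝ) ≤ ((g p.1 - p.2 : ℕ) : ℝ) / N := by
    intro p _; positivity
  have huw : ∀ p ∈ T, ((g p.1 - p.2 : ℕ) : ℝ) / N ≤ (g p.1 : ℝ) / N := by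
    intro p _
    gcongr
    exact_mod_cast Nat.sub_le _ _
  have hw1 : ∀ p ∈ T, (g p.1 : ℝ) / N ≤ 1 := by
    intro p _
    rw [div_le_one hNpos]
    exact_mod_cast hgN p.1
  have hQP : Q ≤ P := by
    rw [hQprod, hPprod]
    exact Finset.prod_le_prod hu0 huw
  have hQ0 : 0 ≤ Q := by
    rw [hQprod]; exact Finset.prod_nonneg hu0
  have hP1 : P ≤ 1 := by
    rw [hPprod]
    exact Finset.prod_le_one (fun p hp => le_trans (hu0 p hp) (huw p hp)) hw1
  have hcardT : (#T : ℝ) = (D : ℝ) := by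
    rw [hTdef, Finset.card_sigma]
    simp [card_range, hDdef]
  have hPQ : P - Q ≤ (D : ℝ) ^ 2 / N := by
    have h1 : P - Q ≤ ∑ p ∈ T, ((g p.1 : ℝ) / N - ((g p.1 - p.2 : ℕ) : ℝ) / N) := by
      rw [hQprod, hPprod]
      exact prod_sub_prod_le_sum T _ _ hu0 huw hw1
    have h2 : ∑ p ∈ T, ((g p.1 : ℝ) / N - ((g p.1 - p.2 : ℕ) : ℝ) / N)
        ≤ ∑ _p ∈ T, (D : ℝ) / N := by
      apply Finset.sum_le_sum
      intro p hp
      have hj : (p.2 : ℝ) ≤ (D : ℝ) := by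
        have hpT := Finset.mem_sigma.mp hp
        have h' : p.2 < a p.1 := Finset.mem_range.mp hpT.2
        have h'' : p.2 ≤ D := le_trans (le_of_lt h')
          (Finset.single_le_sum (f := a) (fun _ _ => Nat.zero_le _) (mem_univ p.1))
        exact_mod_cast h''
      have hle : (g p.1 : ℝ) - ((g p.1 - p.2 : ℕ) : ℝ) ≤ (p.2 : ℝ) := by
        have h0 : g p.1 ≤ (g p.1 - p.2) + p.2 := le_tsub_add
        have h1 := (Nat.cast_le (α := ℝ)).mpr h0
        push_cast at h1
        linarith
      rw [div_sub_div_same]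
      calc ((g p.1 : ℝ) - ((g p.1 - p.2 : ℕ) : ℝ)) / N ≤ (p.2 : ℝ) / N := by gcongr
        _ ≤ (D : ℝ) / N := by gcongr
    have h3 : ∑ _p ∈ T, (D : ℝ) / N = (#T : ℝ) * ((D : ℝ) / N) := by
      rw [Finset.sum_const, nsmul_eq_mul]
    have h4 : (#T : ℝ) * ((D : ℝ) / N) = (D : ℝ) ^ 2 / N := by
      rw [hcardT]; ring
    linarith
  have hrQ : A / B = Q * ((N : ℝ) ^ D / B) := by
    rw [hQdef]
    field_simp
  have hratio : (1 : ℝ) ≤ (N : ℝ) ^ D / B := (one_le_div hB0).mpr hBN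
  have hQ1 : Q ≤ 1 := le_trans hQP hP1
  have hD2 : (0:ℝ) ≤ (D : ℝ) ^ 2 / N := by positivity
  rw [abs_sub_le_iff]
  constructor
  · rw [hrQ]
    have hstep : Q * ((N : ℝ) ^ D / B) - Q ≤ (N : ℝ) ^ D / B - 1 := by
      nlinarith
    nlinarith
  · rw [hrQ]
    have hQr : Q ≤ Q * ((N : ℝ) ^ D / B) := le_mul_of_one_le_right hQ0 hratio
    nlinarith



lemma toF_add {n : ℕ} (β : Fin n →₀ ℕ) (k : Fin n → ℕ) :
    Finsupp.equivFunOnFinite.symm (⇑β + k) = β + Finsupp.equivFunOnFinite.symm k := by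
  ext i
  simp [Finsupp.add_apply]

lemma regroup_sum {n N : ℕ} (c vv : (Fin n →₀ ℕ) → ℝ) (s : Finset (Fin n →₀ ℕ))
    (hdeg : ∀ α ∈ s, ∑ i, α i ≤ N) :
    ∑ α ∈ s, ∑ k ∈ piAntidiag (univ : Finset (Fin n)) (N - ∑ i, α i),
        c α * ((Nat.multinomial univ k : ℝ) * vv (α + Finsupp.equivFunOnFinite.symm k))
    = ∑ g ∈ piAntidiag (univ : Finset (Fin n)) N,
        (∑ α ∈ s.filter (fun α => ∀ i, α i ≤ g i),
          c α * (Nat.multinomial univ (g - ⇑α) : ℝ)) * vv (Finsupp.equivFunOnFinite.symm g) := by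
  classical
  have rhs : ∀ g : Fin n → ℕ, (∑ α ∈ s.filter (fun α => ∀ i, α i ≤ g i),
      c α * (Nat.multinomial univ (g - ⇑α) : ℝ)) * vv (Finsupp.equivFunOnFinite.symm g)
      = ∑ α ∈ s.filter (fun α => ∀ i, α i ≤ g i),
        c α * (Nat.multinomial univ (g - ⇑α) : ℝ) * vv (Finsupp.equivFunOnFinite.symm g) :=
    fun g => Finset.sum_mul _ _ _
  rw [Finset.sum_congr rfl fun g _ => rhs g]
  rw [Finset.sum_sigma', Finset.sum_sigma']
  refine Finset.sum_bij' (fun p _ => ⟨⇑p.1 + p.2, p.1⟩) (fun q _ => ⟨q.2, q.1 - ⇑q.2⟩)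
    ?_ ?_ ?_ ?_ ?_
  · rintro ⟨α, k⟩ hp
    obtain ⟨hp1, hp2⟩ := Finset.mem_sigma.mp hp
    dsimp only at hp1 hp2 ⊢
    obtain ⟨hk1, -⟩ := Finset.mem_piAntidiag.mp hp2
    have hdegα : ∑ i, α i ≤ N := hdeg α hp1
    refine Finset.mem_sigma.mpr ⟨?_, ?_⟩
    · refine Finset.mem_piAntidiag.mpr ⟨?_, fun i _ => Finset.mem_univ i⟩
      simp only [Pi.add_apply]
      rw [Finset.sum_add_distrib]
      have hk1' : ∑ i : Fin n, k i = N - ∑ i : Fin n, α i := hk1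
      omega
    · exact Finset.mem_filter.mpr ⟨hp1, fun i => Nat.le_add_right _ _⟩
  · rintro ⟨g, α⟩ hq
    obtain ⟨hq1, hq2⟩ := Finset.mem_sigma.mp hq
    dsimp only at hq1 hq2 ⊢
    obtain ⟨hgs, -⟩ := Finset.mem_piAntidiag.mp hq1
    obtain ⟨hαs, hle⟩ := Finset.mem_filter.mp hq2
    refine Finset.mem_sigma.mpr ⟨hαs, ?_⟩
    refine Finset.mem_piAntidiag.mpr ⟨?_, fun i _ => Finset.mem_univ i⟩
    simp only [Pi.sub_apply]
    rw [Finset.sum_tsub_distrib Finset.univ (fun i _ => hle i)]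
    have hgs' : ∑ i : Fin n, g i = N := hgs
    omega
  · rintro ⟨α, k⟩ hp
    have hk : (⇑α + k) - ⇑α = k := by funext i; simp
    exact congrArg (Sigma.mk α) hk
  · rintro ⟨g, α⟩ hq
    obtain ⟨hq1, hq2⟩ := Finset.mem_sigma.mp hq
    dsimp only at hq1 hq2 ⊢
    obtain ⟨hαs, hle⟩ := Finset.mem_filter.mp hq2
    have hg' : ⇑α + (g - ⇑α) = g := by
      funext i
      simp only [Pi.add_apply, Pi.sub_apply]
      have := hle i
      omega
    exact congrArg (fun z => (⟨z, α⟩ : Σ _g : Fin n → ℕ, Fin n →₀ ℕ)) hg'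
  · rintro ⟨α, k⟩ hp
    have hk : (⇑α + k) - ⇑α = k := by funext i; simp
    rw [toF_add, hk, mul_assoc]


open MvPolynomial

/-- **Lemma (continuity of the limit functionals over the simplex).**
If a linear functional `L` on the polynomial ring satisfies `L(x^α) ≥ 0` for all `α`,
`L(1) ≤ 1`, and `L(p·(1 - x₁ - ⋯ - xₙ)) = 0` for every polynomial `p`, then
`|L(f)| ≤ sup_{x ∈ Δ_{n-1}} |f(x)|` for every polynomial `f`. -/
theorem limit_functional_bounded_simplex
    {n : ℕ} (L : MvPolynomial (Fin n) ℝ →ₗ[ℝ] ℝ)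
    (h1 : ∀ α : Fin n →₀ ℕ, 0 ≤ L (monomial α (1 : ℝ)))
    (h2 : L 1 ≤ 1)
    (h3 : ∀ p : MvPolynomial (Fin n) ℝ, L (p * (1 - ∑ i, X i)) = 0)
    (f : MvPolynomial (Fin n) ℝ) :
    |L f| ≤ sSup ((fun x => |eval x f|) ''
      {x : Fin n → ℝ | (∀ i, 0 ≤ x i) ∧ ∑ i, x i = 1}) := by
  classical
  set S : Set (Fin n → ℝ) := {x : Fin n → ℝ | (∀ i, 0 ≤ x i) ∧ ∑ i, x i = 1} with hS
  set M : ℝ := sSup ((fun x => |eval x f|) '' S) with hMdef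
  rcases Nat.eq_zero_or_pos n with hn0 | hn
  · subst hn0
    have h := h3 f
    simp only [Finset.univ_eq_empty, Finset.sum_empty, sub_zero, mul_one] at h
    rw [h, abs_zero, hMdef]
    have hSempty : S = ∅ := by
      ext x
      simp [hS]
    rw [hSempty, Set.image_empty, Real.sSup_empty]
  -- main case
  set w : (Fin n →₀ ℕ) → ℝ := fun β => L (monomial β 1) with hwdef
  have hw0 : ∀ β, 0 ≤ w β := h1
  have hLs : ∀ p : MvPolynomial (Fin n) ℝ, L p = L (p * ∑ i, X i) := by
    intro p
    have h := h3 p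
    rw [mul_sub, mul_one, map_sub, sub_eq_zero] at h
    exact h
  have hLsd : ∀ (p : MvPolynomial (Fin n) ℝ) (d : ℕ), L p = L (p * (∑ i, X i) ^ d) := by
    intro p d
    induction d with
    | zero => simp
    | succ d ih => rw [ih, pow_succ, ← mul_assoc]; exact hLs _
  have hmono : ∀ k : Fin n → ℕ,
      (∏ i, X i ^ k i : MvPolynomial (Fin n) ℝ)
        = monomial (Finsupp.equivFunOnFinite.symm k) 1 := by
    intro k
    rw [← prod_X_pow_eq_monomial]
    exact (Finset.prod_subset (Finset.subset_univ _) (fun i _ hi => by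
      rw [show k i = 0 from Finsupp.notMem_support_iff.mp hi, pow_zero])).symm
  have hv : ∀ (β : Fin n →₀ ℕ) (d : ℕ),
      w β = ∑ k ∈ Finset.piAntidiag (Finset.univ : Finset (Fin n)) d,
        (Nat.multinomial Finset.univ k : ℝ) * w (β + Finsupp.equivFunOnFinite.symm k) := by
    intro β d
    calc w β = L (monomial β 1 * (∑ i, X i) ^ d) := hLsd _ d
      _ = ∑ k ∈ Finset.piAntidiag (Finset.univ : Finset (Fin n)) d,
            (Nat.multinomial Finset.univ k : ℝ) * w (β + Finsupp.equivFunOnFinite.symm k) := by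
          rw [Finset.sum_pow_eq_sum_piAntidiag, Finset.mul_sum, map_sum]
          refine Finset.sum_congr rfl fun k _ => ?_
          rw [hmono k]
          have e1 : (monomial β (1:ℝ)) * ((Nat.multinomial Finset.univ k : MvPolynomial (Fin n) ℝ)
                * monomial (Finsupp.equivFunOnFinite.symm k) 1)
              = (Nat.multinomial Finset.univ k : ℝ)
                  • monomial (β + Finsupp.equivFunOnFinite.symm k) (1:ℝ) := by
            rw [← C_eq_coe_nat, C_mul_monomial, monomial_mul, smul_monomial]
            norm_num
          rw [e1, map_smul, smul_eq_mul]
  have hLf : L f = ∑ α ∈ f.support, coeff α f * w α := by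
    conv_lhs => rw [f.as_sum]
    rw [map_sum]
    refine Finset.sum_congr rfl fun α _ => ?_
    have e1 : monomial α (coeff α f) = coeff α f • monomial α (1:ℝ) := by
      rw [smul_monomial, smul_eq_mul, mul_one]
    rw [e1, map_smul, smul_eq_mul]
  have hsupdeg : ∀ α ∈ f.support, ∑ i, α i ≤ f.totalDegree := by
    intro α hα
    have h := MvPolynomial.le_totalDegree hα
    rwa [Finsupp.sum_fintype _ _ (fun _ => rfl)] at h
  have hbdd : BddAbove ((fun x => |eval x f|) '' S) := by
    refine ⟨∑ α ∈ f.support, |coeff α f|, ?_⟩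
    rintro y ⟨x, hx, rfl⟩
    obtain ⟨hx0, hx1⟩ := hx
    have hxle : ∀ i, x i ≤ 1 := by
      intro i
      rw [← hx1]
      exact Finset.single_le_sum (fun j _ => hx0 j) (Finset.mem_univ i)
    dsimp only
    rw [eval_eq']
    refine le_trans (Finset.abs_sum_le_sum_abs _ _) ?_
    refine Finset.sum_le_sum fun α _ => ?_
    rw [abs_mul]
    have hprod : |∏ i, x i ^ α i| ≤ 1 := by
      rw [abs_of_nonneg (Finset.prod_nonneg fun i _ => pow_nonneg (hx0 i) _)]
      exact Finset.prod_le_one (fun i _ => pow_nonneg (hx0 i) _)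
        (fun i _ => pow_le_one₀ (hx0 i) (hxle i))
    calc |coeff α f| * |∏ i, x i ^ α i| ≤ |coeff α f| * 1 :=
          mul_le_mul_of_nonneg_left hprod (abs_nonneg _)
      _ = |coeff α f| := mul_one _
  have hM0 : 0 ≤ M := by
    have hxS : (fun i => if i = (⟨0, hn⟩ : Fin n) then (1:ℝ) else 0) ∈ S := by
      simp only [hS, Set.mem_setOf_eq]
      constructor
      · intro i; split <;> norm_num
      · simp
    exact le_trans (abs_nonneg _) (le_csSup hbdd ⟨_, hxS, rfl⟩)
  have main : ∀ ε : ℝ, 0 < ε → |L f| ≤ M + ε := by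
    intro ε hε
    have hErr : Filter.Tendsto (fun N : ℕ => ∑ α ∈ f.support, |coeff α f| *
        ((((∑ i, α i : ℕ)) : ℝ) ^ 2 / N
          + ((N : ℝ) ^ (∑ i, α i) / (N.descFactorial (∑ i, α i) : ℝ) - 1)))
        Filter.atTop (nhds 0) := by
      have h0 : Filter.Tendsto (fun N : ℕ => ∑ α ∈ f.support, |coeff α f| *
          ((((∑ i, α i : ℕ)) : ℝ) ^ 2 / N
            + ((N : ℝ) ^ (∑ i, α i) / (N.descFactorial (∑ i, α i) : ℝ) - 1)))
          Filter.atTop (nhds (∑ α ∈ f.support, |coeff α f| * ((0:ℝ) + 0))) := by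
        apply tendsto_finset_sum
        intro α _
        exact ((tendsto_const_div_atTop_nhds_zero_nat _).add
          (tendsto_pow_div_descFactorial_sub_one _)).const_mul _
      simpa using h0
    obtain ⟨N, hNa, hNb⟩ := ((hErr.eventually (gt_mem_nhds hε)).and
      (Filter.eventually_ge_atTop (max 1 f.totalDegree))).exists
    have hN1 : 1 ≤ N := le_trans (le_max_left _ _) hNb
    have hND : f.totalDegree ≤ N := le_trans (le_max_right _ _) hNb
    have hregroup : L f = ∑ g ∈ Finset.piAntidiag (Finset.univ : Finset (Fin n)) N,
        (∑ α ∈ f.support.filter (fun α => ∀ i, α i ≤ g i),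
          coeff α f * (Nat.multinomial Finset.univ (g - ⇑α) : ℝ))
          * w (Finsupp.equivFunOnFinite.symm g) := by
      rw [hLf]
      have step1 : ∀ α ∈ f.support, coeff α f * w α
          = ∑ k ∈ Finset.piAntidiag (Finset.univ : Finset (Fin n)) (N - ∑ i, α i),
              coeff α f * ((Nat.multinomial Finset.univ k : ℝ)
                * w (α + Finsupp.equivFunOnFinite.symm k)) := by
        intro α hα
        rw [hv α (N - ∑ i, α i), Finset.mul_sum]
      rw [Finset.sum_congr rfl step1]
      exact regroup_sum (fun α => coeff α f) w f.support
        (fun α hα => le_trans (hsupdeg α hα) hND)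
    have hpoint : ∀ g ∈ Finset.piAntidiag (Finset.univ : Finset (Fin n)) N,
        |∑ α ∈ f.support.filter (fun α => ∀ i, α i ≤ g i),
          coeff α f * (Nat.multinomial Finset.univ (g - ⇑α) : ℝ)|
        ≤ (M + ε) * (Nat.multinomial Finset.univ g : ℝ) := by
      intro g hg
      have hgsum : ∑ i, g i = N := (Finset.mem_piAntidiag.mp hg).1
      have hNpos : (0:ℝ) < N := by exact_mod_cast hN1
      set x : Fin n → ℝ := fun i => (g i : ℝ) / N with hx
      have hxS : x ∈ S := by
        simp only [hS, Set.mem_setOf_eq]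
        constructor
        · intro i
          rw [hx]
          positivity
        · rw [hx]
          dsimp only
          rw [← Finset.sum_div]
          rw [show ∑ i, (g i : ℝ) = (N : ℝ) by exact_mod_cast congrArg Nat.cast hgsum]
          field_simp
      have hfx : |eval x f| ≤ M := le_csSup hbdd ⟨x, hxS, rfl⟩
      set r : (Fin n →₀ ℕ) → ℝ := fun α =>
        (∏ i, ((g i).descFactorial (α i) : ℝ)) / (N.descFactorial (∑ i, α i) : ℝ) with hr
      have hBpos : ∀ α ∈ f.support, (0:ℝ) < (N.descFactorial (∑ i, α i) : ℝ) := by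
        intro α hα
        have hle : ∑ i, α i ≤ N := le_trans (hsupdeg α hα) hND
        have hne : N.descFactorial (∑ i, α i) ≠ 0 := by
          rw [Ne, Nat.descFactorial_eq_zero_iff_lt]; omega
        exact_mod_cast Nat.pos_of_ne_zero hne
      have claim1 : ∑ α ∈ f.support.filter (fun α => ∀ i, α i ≤ g i),
            coeff α f * (Nat.multinomial Finset.univ (g - ⇑α) : ℝ)
          = (Nat.multinomial Finset.univ g : ℝ) * ∑ α ∈ f.support, coeff α f * r α := by
        have e1 : ∀ α ∈ f.support.filter (fun α => ∀ i, α i ≤ g i),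
            coeff α f * (Nat.multinomial Finset.univ (g - ⇑α) : ℝ)
              = (Nat.multinomial Finset.univ g : ℝ) * (coeff α f * r α) := by
          intro α hα
          obtain ⟨hαs, hle⟩ := Finset.mem_filter.mp hα
          have hid := multinomial_descFactorial_identity g ⇑α hle
          rw [hgsum] at hid
          have hidR := congrArg (Nat.cast (R := ℝ)) hid
          push_cast at hidR
          have hB := hBpos α hαs
          have h2' : (Nat.multinomial Finset.univ (g - ⇑α) : ℝ)
              = (Nat.multinomial Finset.univ g : ℝ)
                * (∏ i, ((g i).descFactorial (α i) : ℝ))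
                / (N.descFactorial (∑ i, α i) : ℝ) := by
            rw [eq_div_iff (ne_of_gt hB)]
            linarith [hidR]
          rw [hr]
          dsimp only
          rw [h2']
          ring
        rw [Finset.sum_congr rfl e1]
        have e2 : ∑ α ∈ f.support.filter (fun α => ∀ i, α i ≤ g i),
              (Nat.multinomial Finset.univ g : ℝ) * (coeff α f * r α)
            = ∑ α ∈ f.support, (Nat.multinomial Finset.univ g : ℝ) * (coeff α f * r α) := by
          apply Finset.sum_filter_of_ne
          intro α hα hne
          by_contra hnle
          push_neg at hnle
          obtain ⟨i, hi⟩ := hnle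
          apply hne
          have hz : ((g i).descFactorial (α i) : ℝ) = 0 := by
            exact_mod_cast congrArg (Nat.cast (R := ℝ))
              (Nat.descFactorial_eq_zero_iff_lt.mpr hi)
          have hrz : r α = 0 := by
            rw [hr]
            dsimp only
            rw [Finset.prod_eq_zero (Finset.mem_univ i) hz, zero_div]
          rw [hrz]
          ring
        rw [e2, ← Finset.mul_sum]
      have heval : eval x f = ∑ α ∈ f.support, coeff α f * ∏ i, x i ^ α i := eval_eq' x f
      have claim2 : |∑ α ∈ f.support, coeff α f * r α| ≤ M + ε := by
        have hsplit : ∀ α ∈ f.support, coeff α f * r α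
            = coeff α f * ∏ i, x i ^ α i + coeff α f * (r α - ∏ i, x i ^ α i) := by
          intro α _; ring
        rw [Finset.sum_congr rfl hsplit, Finset.sum_add_distrib]
        refine le_trans (abs_add_le _ _) ?_
        have hEbound : |∑ α ∈ f.support, coeff α f * (r α - ∏ i, x i ^ α i)|
            ≤ ∑ α ∈ f.support, |coeff α f| *
              ((((∑ i, α i : ℕ)) : ℝ) ^ 2 / N
                + ((N : ℝ) ^ (∑ i, α i) / (N.descFactorial (∑ i, α i) : ℝ) - 1)) := by
          refine le_trans (Finset.abs_sum_le_sum_abs _ _) ?_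
          refine Finset.sum_le_sum fun α hα => ?_
          rw [abs_mul]
          refine mul_le_mul_of_nonneg_left ?_ (abs_nonneg _)
          have hest := bernstein_weight_est N hN1 g hgsum ⇑α (le_trans (hsupdeg α hα) hND)
          exact hest
        have hfx' : |∑ α ∈ f.support, coeff α f * ∏ i, x i ^ α i| ≤ M := by
          rw [← heval]; exact hfx
        linarith [hNa]
      rw [claim1, abs_mul, abs_of_nonneg
        (by positivity : (0:ℝ) ≤ (Nat.multinomial Finset.univ g : ℝ)), mul_comm]
      exact mul_le_mul_of_nonneg_right claim2 (by positivity)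
    have hv0 : ∑ g ∈ Finset.piAntidiag (Finset.univ : Finset (Fin n)) N,
        (Nat.multinomial Finset.univ g : ℝ) * w (Finsupp.equivFunOnFinite.symm g) = w 0 := by
      have h := hv 0 N
      simp only [zero_add] at h
      exact h.symm
    have hw01 : w 0 ≤ 1 := by
      have e : w 0 = L 1 := by
        rw [hwdef]
        dsimp only
        rw [monomial_zero', C_1]
      rw [e]; exact h2
    calc |L f| = |∑ g ∈ Finset.piAntidiag (Finset.univ : Finset (Fin n)) N,
          (∑ α ∈ f.support.filter (fun α => ∀ i, α i ≤ g i),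
            coeff α f * (Nat.multinomial Finset.univ (g - ⇑α) : ℝ))
            * w (Finsupp.equivFunOnFinite.symm g)| := by rw [hregroup]
      _ ≤ ∑ g ∈ Finset.piAntidiag (Finset.univ : Finset (Fin n)) N,
          |(∑ α ∈ f.support.filter (fun α => ∀ i, α i ≤ g i),
            coeff α f * (Nat.multinomial Finset.univ (g - ⇑α) : ℝ))
            * w (Finsupp.equivFunOnFinite.symm g)| := Finset.abs_sum_le_sum_abs _ _
      _ ≤ ∑ g ∈ Finset.piAntidiag (Finset.univ : Finset (Fin n)) N,
          ((M + ε) * (Nat.multinomial Finset.univ g : ℝ))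
            * w (Finsupp.equivFunOnFinite.symm g) := by
          refine Finset.sum_le_sum fun g hg => ?_
          rw [abs_mul, abs_of_nonneg (hw0 _)]
          exact mul_le_mul_of_nonneg_right (hpoint g hg) (hw0 _)
      _ = (M + ε) * ∑ g ∈ Finset.piAntidiag (Finset.univ : Finset (Fin n)) N,
          (Nat.multinomial Finset.univ g : ℝ) * w (Finsupp.equivFunOnFinite.symm g) := by
          rw [Finset.mul_sum]
          exact Finset.sum_congr rfl fun g _ => by ring
      _ = (M + ε) * w 0 := by rw [hv0]
      _ ≤ (M + ε) * 1 := mul_le_mul_of_nonneg_left hw01 (by linarith)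
      _ = M + ε := mul_one _
  by_contra hcon
  push_neg at hcon
  have h' := main ((|L f| - M) / 2) (by linarith)
  linarith
end

section
/- Let p be a homogeneous polynomial of degree d in n variables and r ∈ ℕ. Let p^(r) be the maximum λ ∈ ℝ such that the polynomial (x_1 + ... + x_n)^r·( p(x) − λ(x_1 + ... + x_n)^d ) has only nonnegative coefficients, and let f_LP^(r+d) be the minimum of L(p) over all linear functionals L on ℝ[x]_{r+d} satisfying L(1) = 1, L(x^α) ≥ 0 for all |α| ≤ r + d, and L(x^α) = L(x^α·(x_1 + ... + x_n)) for all |α| ≤ r + d − 1. Then p^(r) = f_LP^(r+d). -/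
open MvPolynomial Finset

namespace DKLPAux

variable {n : ℕ}

/-- degree over univ equals Finsupp.degree -/
lemma deg_eq (β : Fin n →₀ ℕ) : β.degree = ∑ i, β i := by
  unfold Finsupp.degree
  exact Finset.sum_subset (Finset.subset_univ _) (by
    intro i _ hi
    simpa using Finsupp.notMem_support_iff.mp hi)

lemma coeff_mul_nonneg {q q' : MvPolynomial (Fin n) ℝ}
    (hq : ∀ β, 0 ≤ coeff β q) (hq' : ∀ β, 0 ≤ coeff β q') (β : Fin n →₀ ℕ) :
    0 ≤ coeff β (q * q') := by
  rw [coeff_mul]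
  exact Finset.sum_nonneg fun x _ => mul_nonneg (hq _) (hq' _)

lemma coeff_S_nonneg (β : Fin n →₀ ℕ) : 0 ≤ coeff β (∑ i, X i : MvPolynomial (Fin n) ℝ) := by
  classical
  rw [coeff_sum]
  refine Finset.sum_nonneg fun i _ => ?_
  rw [coeff_X']
  positivity

lemma coeff_S_pow_nonneg (k : ℕ) (β : Fin n →₀ ℕ) :
    0 ≤ coeff β ((∑ i, X i : MvPolynomial (Fin n) ℝ) ^ k) := by
  induction k generalizing β with
  | zero => simp [coeff_one]; positivity
  | succ k ih =>
      rw [pow_succ]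
      exact coeff_mul_nonneg ih coeff_S_nonneg β

lemma S_homog : (∑ i, X i : MvPolynomial (Fin n) ℝ).IsHomogeneous 1 :=
  IsHomogeneous.sum _ _ _ fun i _ => isHomogeneous_X _ i

lemma S_pow_homog (k : ℕ) : ((∑ i, X i : MvPolynomial (Fin n) ℝ) ^ k).IsHomogeneous k := by
  simpa using S_homog.pow k

lemma sum_univ_single (i : Fin n) (c : ℕ) : ∑ j, Finsupp.single i c j = c := by
  classical
  rw [Finset.sum_eq_single i]
  · simp
  · intro j _ hj; simp [Finsupp.single_apply, Ne.symm hj]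
  · simp

lemma coeff_S_pow_pos {k : ℕ} {β : Fin n →₀ ℕ} (hβ : ∑ i, β i = k) :
    0 < coeff β ((∑ i, X i : MvPolynomial (Fin n) ℝ) ^ k) := by
  classical
  induction k generalizing β with
  | zero =>
      have : β = 0 := by
        ext i
        have := Finset.sum_eq_zero_iff.mp hβ
        exact this i (Finset.mem_univ i)
      simp [this, coeff_one]
  | succ k ih =>
      have hne : β ≠ 0 := by
        intro h; simp [h] at hβ
      obtain ⟨i, hi⟩ : ∃ i, β i ≠ 0 := by
        by_contra h
        push_neg at h
        exact hne (Finsupp.ext fun i => h i)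
      set γ := β - Finsupp.single i 1 with hγ
      have hβγ : β = γ + Finsupp.single i 1 := by
        ext j
        rcases eq_or_ne i j with rfl | hji
        · simp only [Finsupp.add_apply, Finsupp.tsub_apply, hγ, Finsupp.single_eq_same]
          have := hi
          omega
        · simp [hγ, Finsupp.single_apply, hji]
      have hγsum : ∑ j, γ j = k := by
        have : (∑ j, γ j) + (∑ j, Finsupp.single i 1 j) = k + 1 := by
          rw [← Finset.sum_add_distrib]
          simpa [← Finsupp.add_apply, ← hβγ] using hβ
        rw [sum_univ_single] at this
        omega
      rw [pow_succ]
      have hterm : ∀ j : Fin n, 0 ≤ coeff β ((∑ i, X i : MvPolynomial (Fin n) ℝ) ^ k * X j) :=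
        fun j => coeff_mul_nonneg (coeff_S_pow_nonneg k) (fun β' => by rw [coeff_X']; positivity) β
      have hmul : ((∑ i, X i : MvPolynomial (Fin n) ℝ) ^ k * ∑ i, X i)
          = ∑ j, (∑ i, X i : MvPolynomial (Fin n) ℝ) ^ k * X j := Finset.mul_sum _ _ _
      rw [hmul, coeff_sum]
      refine Finset.sum_pos' (fun j _ => hterm j) ⟨i, Finset.mem_univ i, ?_⟩
      rw [hβγ, coeff_mul_X]
      exact ih hγsum

end DKLPAux

namespace DKLPAux

variable {n : ℕ}

lemma support_deg {q : MvPolynomial (Fin n) ℝ} {e : ℕ} (hq : q.IsHomogeneous e)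
    {α : Fin n →₀ ℕ} (hα : α ∈ q.support) : ∑ i, α i = e := by
  rw [← deg_eq]
  by_contra h
  exact (MvPolynomial.mem_support_iff.mp hα) (hq.coeff_eq_zero h)

section Lfunc

variable {L : MvPolynomial (Fin n) ℝ → ℝ}
  (hadd : ∀ q q', L (q + q') = L q + L q')
  (hsmul : ∀ (c : ℝ) q, L (c • q) = c * L q)

include hadd hsmul

omit hadd in
lemma L_zero : L 0 = 0 := by
  have := hsmul 0 0
  simpa using this

lemma L_sum {ι : Type*} (s : Finset ι) (f : ι → MvPolynomial (Fin n) ℝ) :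
    L (∑ i ∈ s, f i) = ∑ i ∈ s, L (f i) := by
  classical
  induction s using Finset.induction with
  | empty => simpa using L_zero hsmul
  | insert _ _ h ih => rw [Finset.sum_insert h, hadd, ih, Finset.sum_insert h]

lemma L_eq_sum (q : MvPolynomial (Fin n) ℝ) :
    L q = ∑ α ∈ q.support, coeff α q * L (monomial α 1) := by
  conv_lhs => rw [as_sum q]
  rw [L_sum hadd hsmul]
  refine Finset.sum_congr rfl fun α _ => ?_
  rw [← hsmul]
  congr 1
  rw [smul_monomial, smul_eq_mul, mul_one]

lemma L_step {k : ℕ}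
    (hmono : ∀ α : Fin n →₀ ℕ, (∑ i, α i) + 1 ≤ k →
      L (monomial α 1) = L (monomial α 1 * ∑ i, X i))
    {q : MvPolynomial (Fin n) ℝ} {e : ℕ} (hq : q.IsHomogeneous e) (he : e + 1 ≤ k) :
    L (q * ∑ i, X i) = L q := by
  conv_lhs => rw [as_sum q, Finset.sum_mul]
  rw [L_sum hadd hsmul, L_eq_sum hadd hsmul q]
  refine Finset.sum_congr rfl fun α hα => ?_
  have hdeg : ∑ i, α i = e := support_deg hq hα
  have h1 : (monomial α (coeff α q)) * (∑ i, X i : MvPolynomial (Fin n) ℝ)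
      = coeff α q • ((monomial α 1) * ∑ i, X i) := by
    rw [← smul_mul_assoc, smul_monomial, smul_eq_mul, mul_one]
  rw [h1, hsmul, ← hmono α (by omega)]

lemma L_mul_S_pow {k : ℕ}
    (hmono : ∀ α : Fin n →₀ ℕ, (∑ i, α i) + 1 ≤ k →
      L (monomial α 1) = L (monomial α 1 * ∑ i, X i))
    {q : MvPolynomial (Fin n) ℝ} {e : ℕ} (hq : q.IsHomogeneous e)
    {j : ℕ} (hj : e + j ≤ k) :
    L (q * (∑ i, X i) ^ j) = L q := by
  induction j with
  | zero => simp
  | succ j ih =>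
      rw [pow_succ, ← mul_assoc]
      rw [L_step hadd hsmul hmono (hq.mul (S_pow_homog j)) (by omega)]
      exact ih (by omega)

end Lfunc

end DKLPAux

namespace DKLPAux

variable {n : ℕ}

/-- generic coefficient functional -/
noncomputable def LS (w : (Fin n →₀ ℕ) → ℝ) (q : MvPolynomial (Fin n) ℝ) : ℝ :=
  ∑ α ∈ q.support, coeff α q * w α

lemma LS_subset (w : (Fin n →₀ ℕ) → ℝ) {q : MvPolynomial (Fin n) ℝ} {t : Finset (Fin n →₀ ℕ)}
    (h : q.support ⊆ t) : LS w q = ∑ α ∈ t, coeff α q * w α :=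
  Finset.sum_subset h (fun α _ hα => by
    rw [MvPolynomial.notMem_support_iff.mp hα, zero_mul])

lemma LS_add (w : (Fin n →₀ ℕ) → ℝ) (q q' : MvPolynomial (Fin n) ℝ) :
    LS w (q + q') = LS w q + LS w q' := by
  classical
  rw [LS_subset w (t := q.support ∪ q'.support ∪ (q + q').support)
      (Finset.subset_union_right),
    LS_subset w (t := q.support ∪ q'.support ∪ (q + q').support)
      (subset_trans Finset.subset_union_left Finset.subset_union_left),
    LS_subset w (t := q.support ∪ q'.support ∪ (q + q').support)
      (subset_trans Finset.subset_union_right Finset.subset_union_left),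
    ← Finset.sum_add_distrib]
  refine Finset.sum_congr rfl fun α _ => ?_
  rw [coeff_add]; ring

lemma LS_smul (w : (Fin n →₀ ℕ) → ℝ) (c : ℝ) (q : MvPolynomial (Fin n) ℝ) :
    LS w (c • q) = c * LS w q := by
  rw [LS_subset w (t := q.support) (MvPolynomial.support_smul), LS, Finset.mul_sum]
  refine Finset.sum_congr rfl fun α _ => ?_
  rw [coeff_smul, smul_eq_mul]; ring

lemma LS_monomial (w : (Fin n →₀ ℕ) → ℝ) (α : Fin n →₀ ℕ) :
    LS w (monomial α (1:ℝ)) = w α := by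
  classical
  rw [LS, support_monomial, if_neg one_ne_zero, Finset.sum_singleton, coeff_monomial,
    if_pos rfl, one_mul]

end DKLPAux

open DKLPAux Finset in
/-- **Theorem (the RLT/LP relaxation generalizes the de Klerk–Laurent–Parrilo bound).**
For a homogeneous polynomial `p` of degree `d` and `r ∈ ℕ`, the bound
`p^(r) = max{λ : (x₁+⋯+xₙ)^r (p - λ(x₁+⋯+xₙ)^d) has only nonnegative coefficients}`
equals the value `f_LP^(r+d)` of the level-`(r+d)` LP relaxation of
`min_{x ∈ Δ_{n-1}} p(x)`. -/
theorem dklp_bound_eq_lp_relaxation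
    {n d r : ℕ} (hn : 0 < n)
    (p : MvPolynomial (Fin n) ℝ) (hp : p.IsHomogeneous d) :
    sSup {lam : ℝ | ∀ β : Fin n →₀ ℕ,
        0 ≤ coeff β ((∑ i, X i) ^ r * (p - MvPolynomial.C lam * (∑ i, X i) ^ d))} =
    sInf ((fun L => L p) '' {L : MvPolynomial (Fin n) ℝ → ℝ |
      (∀ q q', L (q + q') = L q + L q') ∧ (∀ (c : ℝ) q, L (c • q) = c * L q) ∧
      L 1 = 1 ∧
      (∀ α : Fin n →₀ ℕ, (∑ i, α i) ≤ r + d → 0 ≤ L (monomial α 1)) ∧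
      (∀ α : Fin n →₀ ℕ, (∑ i, α i) + 1 ≤ r + d →
        L (monomial α 1) = L (monomial α 1 * ∑ i, X i))}) := by
  classical
  have i0 : Fin n := ⟨0, hn⟩
  set Sx : MvPolynomial (Fin n) ℝ := ∑ i, X i with hSxdef
  -- the minimizing multi-index
  have hDne : (Finset.finsuppAntidiag (Finset.univ : Finset (Fin n)) (r + d)).Nonempty := by
    refine ⟨Finsupp.single i0 (r + d), ?_⟩
    rw [Finset.mem_finsuppAntidiag]
    exact ⟨sum_univ_single i0 (r + d), Finset.subset_univ _⟩
  obtain ⟨βs, hβsD, hmin⟩ := Finset.exists_min_image _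
    (fun β => coeff β (Sx ^ r * p) / coeff β (Sx ^ (r + d))) hDne
  have hβs : ∑ i, βs i = r + d := (Finset.mem_finsuppAntidiag.mp hβsD).1
  have hmpos : (0:ℝ) < coeff βs (Sx ^ (r + d)) := coeff_S_pow_pos hβs
  set m : ℝ := coeff βs (Sx ^ (r + d)) with hm
  set lam0 : ℝ := coeff βs (Sx ^ r * p) / m with hlam0
  -- coefficient identity
  have hcoeff : ∀ (lam : ℝ) (β : Fin n →₀ ℕ),
      coeff β (Sx ^ r * (p - MvPolynomial.C lam * Sx ^ d)) =
        coeff β (Sx ^ r * p) - lam * coeff β (Sx ^ (r + d)) := by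
    intro lam β
    have h : Sx ^ r * (p - MvPolynomial.C lam * Sx ^ d)
        = Sx ^ r * p - MvPolynomial.C lam * Sx ^ (r + d) := by ring
    rw [h, coeff_sub, coeff_C_mul]
  have hmem : ∀ β : Fin n →₀ ℕ, ∑ i, β i = r + d →
      lam0 * coeff β (Sx ^ (r + d)) ≤ coeff β (Sx ^ r * p) := by
    intro β hβ
    have hβD : β ∈ Finset.finsuppAntidiag Finset.univ (r + d) :=
      Finset.mem_finsuppAntidiag.mpr ⟨hβ, Finset.subset_univ _⟩
    have h1 := hmin β hβD
    have h2 : (0:ℝ) < coeff β (Sx ^ (r + d)) := coeff_S_pow_pos hβ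
    exact (le_div_iff₀ h2).mp h1
  have hlamA : ∀ β : Fin n →₀ ℕ,
      0 ≤ coeff β (Sx ^ r * (p - MvPolynomial.C lam0 * Sx ^ d)) := by
    intro β
    rw [hcoeff]
    by_cases hβ : ∑ i, β i = r + d
    · linarith [hmem β hβ]
    · have hz1 : coeff β (Sx ^ r * p) = 0 := by
        refine ((S_pow_homog r).mul hp).coeff_eq_zero ?_
        rw [deg_eq]; exact hβ
      have hz2 : coeff β (Sx ^ (r + d)) = 0 :=
        (S_pow_homog (r + d)).coeff_eq_zero (by rw [deg_eq]; exact hβ)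
      rw [hz1, hz2]
      simp
  have hGreat : IsGreatest {lam : ℝ | ∀ β : Fin n →₀ ℕ,
      0 ≤ coeff β (Sx ^ r * (p - MvPolynomial.C lam * Sx ^ d))} lam0 := by
    constructor
    · exact hlamA
    · intro lam hlam
      have h := hlam βs
      rw [hcoeff] at h
      rw [hlam0, le_div_iff₀ hmpos]
      rw [hm]
      linarith
  -- the optimal linear functional
  set u : (Fin n →₀ ℕ) → ℝ := fun α =>
    if (∑ i, α i) ≤ r + d then coeff βs (Sx ^ (r + d - ∑ i, α i) * monomial α 1) else 0
    with hu
  set L : MvPolynomial (Fin n) ℝ → ℝ := fun q => LS u q / m with hLdef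
  have hadd : ∀ q q', L (q + q') = L q + L q' := by
    intro q q'
    rw [hLdef]
    simp only
    rw [LS_add]
    ring
  have hsmul : ∀ (c : ℝ) q, L (c • q) = c * L q := by
    intro c q
    rw [hLdef]
    simp only
    rw [LS_smul]
    ring
  have hLmono : ∀ α : Fin n →₀ ℕ, L (monomial α 1) = u α / m := by
    intro α
    rw [hLdef]
    simp only
    rw [LS_monomial]
  have hL1 : L 1 = 1 := by
    have h1 : (1 : MvPolynomial (Fin n) ℝ) = monomial 0 1 := by
      rw [monomial_zero', MvPolynomial.C_1]
    rw [h1, hLmono, hu]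
    simp only [Finsupp.coe_zero, Pi.zero_apply, Finset.sum_const_zero,
      Nat.zero_le, if_pos, Nat.sub_zero]
    rw [← h1, mul_one, ← hm]
    exact div_self (ne_of_gt hmpos)
  have hLpos : ∀ α : Fin n →₀ ℕ, (∑ i, α i) ≤ r + d → 0 ≤ L (monomial α 1) := by
    intro α hα
    rw [hLmono, hu]
    simp only [if_pos hα]
    refine div_nonneg (coeff_mul_nonneg (coeff_S_pow_nonneg _) ?_ βs) (le_of_lt hmpos)
    intro β
    rw [coeff_monomial]
    split <;> norm_num
  have hharm : ∀ α : Fin n →₀ ℕ, (∑ i, α i) + 1 ≤ r + d →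
      L (monomial α 1) = L (monomial α 1 * Sx) := by
    intro α hα
    have hXmono : ∀ i : Fin n, monomial α (1:ℝ) * X i = monomial (α + Finsupp.single i 1) 1 := by
      intro i
      rw [show (X i : MvPolynomial (Fin n) ℝ) = monomial (Finsupp.single i 1) 1 from rfl,
        monomial_mul, mul_one]
    have hexp : monomial α (1:ℝ) * Sx = ∑ i, monomial (α + Finsupp.single i 1) (1:ℝ) := by
      rw [hSxdef, Finset.mul_sum]
      exact Finset.sum_congr rfl fun i _ => hXmono i
    have hdegi : ∀ i : Fin n, ∑ j, ((α + Finsupp.single i 1) : Fin n →₀ ℕ) j = (∑ j, α j) + 1 := by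
      intro i
      simp only [Finsupp.add_apply]
      rw [Finset.sum_add_distrib, sum_univ_single]
    have hpowsplit : r + d - (∑ j, α j) = (r + d - (∑ j, α j) - 1) + 1 := by omega
    have hkey : Sx ^ (r + d - ∑ j, α j) * monomial α (1:ℝ)
        = ∑ i, Sx ^ (r + d - (∑ j, α j) - 1) * monomial (α + Finsupp.single i 1) (1:ℝ) := by
      conv_lhs => rw [hpowsplit]
      rw [pow_succ]
      have hstep : Sx ^ (r + d - (∑ j, α j) - 1) * Sx * monomial α (1:ℝ)
          = Sx ^ (r + d - (∑ j, α j) - 1) * (monomial α 1 * Sx) := by ring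
      rw [hstep, hexp, Finset.mul_sum]
    rw [hexp, L_sum hadd hsmul, hLmono, hu]
    simp only [if_pos (by omega : (∑ i, α i) ≤ r + d)]
    rw [hkey, coeff_sum, Finset.sum_div]
    refine Finset.sum_congr rfl fun i _ => ?_
    rw [hLmono, hu]
    simp only [hdegi i, if_pos hα]
    rw [Nat.sub_sub]
  have hLp : L p = lam0 := by
    rw [hLdef]
    simp only
    rw [hlam0]
    congr 1
    rw [LS]
    have hsup : ∀ α ∈ p.support, coeff α p * u α
        = coeff βs (Sx ^ r * monomial α (coeff α p)) := by
      intro α hα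
      have hd : ∑ i, α i = d := support_deg hp hα
      rw [hu]
      simp only [hd, if_pos (by omega : d ≤ r + d)]
      rw [show r + d - d = r by omega]
      rw [show monomial α (coeff α p) = coeff α p • monomial α (1:ℝ) by
        rw [smul_monomial, smul_eq_mul, mul_one]]
      rw [mul_smul_comm, coeff_smul, smul_eq_mul]
    rw [Finset.sum_congr rfl hsup, ← coeff_sum, ← Finset.mul_sum, ← as_sum]
  -- lower bound for arbitrary feasible functionals
  have hLow : ∀ Lf : MvPolynomial (Fin n) ℝ → ℝ,
      (∀ q q', Lf (q + q') = Lf q + Lf q') → (∀ (c : ℝ) q, Lf (c • q) = c * Lf q) →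
      Lf 1 = 1 → (∀ α : Fin n →₀ ℕ, (∑ i, α i) ≤ r + d → 0 ≤ Lf (monomial α 1)) →
      (∀ α : Fin n →₀ ℕ, (∑ i, α i) + 1 ≤ r + d →
        Lf (monomial α 1) = Lf (monomial α 1 * Sx)) →
      lam0 ≤ Lf p := by
    intro Lf ha hs h1 hposf hharmf
    have hSk : Lf (Sx ^ (r + d)) = 1 := by
      have h := L_mul_S_pow ha hs hharmf (isHomogeneous_one _ _)
        (by omega : 0 + (r + d) ≤ r + d)
      rw [one_mul, h1] at h
      exact h
    have hLfp : Lf (Sx ^ r * p) = Lf p := by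
      have h := L_mul_S_pow ha hs hharmf hp (by omega : d + r ≤ r + d)
      rw [mul_comm] at h
      exact h
    have hsplit : Sx ^ r * p
        = (Sx ^ r * (p - MvPolynomial.C lam0 * Sx ^ d)) + lam0 • Sx ^ (r + d) := by
      rw [smul_eq_C_mul]
      ring
    have hq0homog : (Sx ^ r * (p - MvPolynomial.C lam0 * Sx ^ d)).IsHomogeneous (r + d) := by
      refine (S_pow_homog r).mul (hp.sub ?_)
      simpa using (S_pow_homog d).C_mul lam0
    have hq0nn : 0 ≤ Lf (Sx ^ r * (p - MvPolynomial.C lam0 * Sx ^ d)) := by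
      rw [L_eq_sum ha hs]
      refine Finset.sum_nonneg fun α hα => mul_nonneg ?_ (hposf α ?_)
      · exact hlamA α
      · rw [support_deg hq0homog hα]
    have hval : Lf (Sx ^ r * p)
        = Lf (Sx ^ r * (p - MvPolynomial.C lam0 * Sx ^ d)) + lam0 := by
      rw [hsplit, ha, hs, hSk, mul_one]
    rw [← hLfp, hval]
    linarith
  rw [hGreat.csSup_eq]
  symm
  apply IsLeast.csInf_eq
  constructor
  · exact ⟨L, ⟨hadd, hsmul, hL1, hLpos, hharm⟩, hLp⟩
  · rintro v ⟨Lf, ⟨ha, hs, h1, hposf, hharmf⟩, rfl⟩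
    exact hLow Lf ha hs h1 hposf hharmf
end
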